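/- arXiv:2310.12265 — 2 statements merged into one kernel-verified Lean document; each statement's English description precedes it below -/
import Mathlib

section
/- Let u, w ∈ G(m, p, n) and suppose that codimfix(u) + codimfix(u⁻¹w) = n + c(w) − 2·|Π_u(w)| + #{parts of Π_u(w) of nonzero total weight}. Then for each part B of Π_u(w): c(u|_B) + c(u⁻¹w|_B) = #Supp(B) − c(w|_B) + 2, and exactly one of the following holds: (i) wt(w|_B) = 0 and all cycles of u|_B and of u⁻¹w|_B have weight 0; (ii) wt(u|_B) = wt(w|_B) ≠ 0, exactly one cycle of u|_B has weight wt(w|_B) while all its other cycles have weight 0, and all cycles of u⁻¹w|_B have weight 0; (iii) wt(u⁻¹w|_B) = wt(w|_B) ≠ 0, exactly one cycle of u⁻¹w|_B has weight wt(w|_B) while all its other cycles have weight 0, and all cycles of u|_B have weight 0. -/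
open Equiv Finset
@[ext]
structure GW (m n : ℕ) where
  perm : Equiv.Perm (Fin n)
  wt : Fin n → ZMod m
namespace GW
variable {m n : ℕ}
instance : Mul (GW m n) :=
  ⟨fun x y => ⟨x.perm * y.perm, fun i => x.wt i + y.wt (x.perm⁻¹ i)⟩⟩
instance : One (GW m n) := ⟨⟨1, 0⟩⟩
instance : Inv (GW m n) := ⟨fun x => ⟨x.perm⁻¹, fun i => -x.wt (x.perm i)⟩⟩
@[simp] theorem mul_perm (x y : GW m n) : (x * y).perm = x.perm * y.perm := rfl
@[simp] theorem mul_wt (x y : GW m n) (i : Fin n) :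
    (x * y).wt i = x.wt i + y.wt (x.perm⁻¹ i) := rfl
@[simp] theorem one_perm : (1 : GW m n).perm = 1 := rfl
@[simp] theorem one_wt (i : Fin n) : (1 : GW m n).wt i = 0 := rfl
@[simp] theorem inv_perm (x : GW m n) : (x⁻¹).perm = x.perm⁻¹ := rfl
@[simp] theorem inv_wt (x : GW m n) (i : Fin n) : (x⁻¹).wt i = -x.wt (x.perm i) := rfl
private theorem gw_mul_assoc (a b c : GW m n) : a * b * c = a * (b * c) := by
  ext i
  · simp [mul_assoc]
  · simp [mul_inv_rev, add_assoc]
private theorem gw_one_mul (a : GW m n) : 1 * a = a := by ext i <;> simp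
private theorem gw_mul_one (a : GW m n) : a * 1 = a := by ext i <;> simp
private theorem gw_inv_mul_cancel (a : GW m n) : a⁻¹ * a = 1 := by ext i <;> simp
instance : Group (GW m n) where
  mul := (· * ·)
  one := 1
  inv := Inv.inv
  mul_assoc := gw_mul_assoc
  one_mul := gw_one_mul
  mul_one := gw_mul_one
  inv_mul_cancel := gw_inv_mul_cancel
def cycleOf (w : GW m n) (i : Fin n) : Finset (Fin n) :=
  Finset.univ.filter fun j => w.perm.SameCycle i j
def cycles (w : GW m n) : Finset (Finset (Fin n)) :=
  Finset.univ.image fun i => w.cycleOf i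
def cycWt (w : GW m n) (C : Finset (Fin n)) : ZMod m := ∑ i ∈ C, w.wt i
def numCycles (w : GW m n) : ℕ := (cycles w).card
def c0 (w : GW m n) : ℕ := ((cycles w).filter fun C => cycWt w C = 0).card
def codimfix (w : GW m n) : ℕ := n - c0 w
def wtTot (w : GW m n) : ZMod m := ∑ i, w.wt i

-- NEW PIECES BELOW --

/-- The base relation on cycles of `w` induced by `u`: two cycles of `w` are related if
some cycle of `u` meets both of them. -/
def piRelBase (u w : GW m n) (C₁ C₂ : Finset (Fin n)) : Prop :=
  C₁ ∈ cycles w ∧ C₂ ∈ cycles w ∧ ∃ D ∈ cycles u, (D ∩ C₁).Nonempty ∧ (D ∩ C₂).Nonempty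

/-- The equivalence relation on the cycles of `w` generated by `piRelBase`. -/
def piRel (u w : GW m n) : Finset (Fin n) → Finset (Fin n) → Prop :=
  Relation.EqvGen (piRelBase u w)

open Classical in
/-- The part of the partition `Π_u(w)` containing the cycle `C` of `w`. -/
noncomputable def piPart (u w : GW m n) (C : Finset (Fin n)) : Finset (Finset (Fin n)) :=
  (cycles w).filter fun C' => piRel u w C C'

/-- The set partition `Π_u(w)` of the cycles of `w`, as the set of its parts. -/
noncomputable def piParts (u w : GW m n) : Finset (Finset (Finset (Fin n))) :=
  (cycles w).image fun C => piPart u w C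

/-- The weight of a collection `B` of cycles: the sum of the weights of its cycles. -/
def partWt (w : GW m n) (B : Finset (Finset (Fin n))) : ZMod m :=
  ∑ C ∈ B, cycWt w C

open Classical in
/-- The number of parts of `Π_u(w)` of nonzero total weight. -/
noncomputable def piPartsNonzeroWt (u w : GW m n) : ℕ :=
  ((piParts u w).filter fun B => partWt w B ≠ 0).card

/-- The support of a collection of cycles: the union of the cycles' underlying sets. -/
def supp (B : Finset (Finset (Fin n))) : Finset (Fin n) := B.sup id

/-- Restriction of a permutation to an invariant set `A` (junk value `1` if `A` is
not invariant): it agrees with `σ` on `A` and is the identity off `A`. -/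
noncomputable def restrictPerm (σ : Equiv.Perm (Fin n)) (A : Finset (Fin n)) :
    Equiv.Perm (Fin n) :=
  if h : ∀ i, σ i ∈ A ↔ i ∈ A then
    { toFun := fun i => if i ∈ A then σ i else i
      invFun := fun i => if i ∈ A then σ.symm i else i
      left_inv := by
        intro i
        by_cases hi : i ∈ A
        · simp [hi, (h i).mpr hi]
        · simp [hi]
      right_inv := by
        intro j
        by_cases hj : j ∈ A
        · have hs : σ.symm j ∈ A := by
            have h2 := h (σ.symm j)
            rw [Equiv.apply_symm_apply] at h2
            exact h2.mp hj
          simp [hj, hs]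
        · simp [hj] }
  else 1


/-- The restriction `x|_A` of `x` to a subset `A` of `{1,…,n}` (stabilized by `x`):
it agrees with `x` on `A` and acts as the identity, with weight `0`, off `A`. -/
noncomputable def restrict (x : GW m n) (A : Finset (Fin n)) : GW m n :=
  ⟨restrictPerm x.perm A, fun i => if i ∈ A then x.wt i else 0⟩

/-- The cycles of `x` contained in `A`; for `x = y|_A` this gives the cycles of the
restriction of `y` to `A`, viewed as an element of `G(m,1,#A)`. -/
def cyclesIn (x : GW m n) (A : Finset (Fin n)) : Finset (Finset (Fin n)) :=
  (cycles x).filter fun C => C ⊆ A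

/-- The monomial matrix representing `w`: the nonzero entry in column `j` sits in row
`w.perm j` and equals `ζ^(a_(w.perm j))`, where `ζ = exp(2πi/m)`. -/
noncomputable def toMatrix (w : GW m n) : Matrix (Fin n) (Fin n) ℂ :=
  Matrix.of fun i j =>
    if w.perm j = i then Complex.exp (2 * Real.pi * Complex.I * ((w.wt i).val : ℂ) / (m : ℂ))
    else 0

/-- `S` (a set of cycles of `w`) can be partitioned into singletons whose weight is
`0 (mod p)` and pairs of cycles whose weights sum to `0` in `ℤ/mℤ`; encoded by an
involution pairing up the cycles. -/
def PairedUp (p : ℕ) (hpm : p ∣ m) (w : GW m n) (S : Finset (Finset (Fin n))) : Prop :=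
  ∃ π : {C // C ∈ S} → {C // C ∈ S}, Function.Involutive π ∧
    (∀ C, π C = C → ZMod.castHom hpm (ZMod p) (cycWt w C.1) = 0) ∧
    (∀ C, π C ≠ C → cycWt w C.1 + cycWt w (π C).1 = 0)

/-- Membership in `G(m,p,n)`: the total weight is `0 (mod p)`. -/
def Gmem (p : ℕ) (hpm : p ∣ m) (w : GW m n) : Prop :=
  ZMod.castHom hpm (ZMod p) (wtTot w) = 0

/-- A reflection of `G(m,p,n)`: an element of the group whose fixed space has codimension 1. -/
def IsRefl (p : ℕ) (hpm : p ∣ m) (t : GW m n) : Prop :=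
  Gmem p hpm t ∧ codimfix t = 1

/-- The reflection length of `w` with respect to the reflections of `G(m,p,n)`. -/
noncomputable def lR (p : ℕ) (hpm : p ∣ m) (w : GW m n) : ℕ :=
  sInf {k | ∃ l : List (GW m n), (∀ t ∈ l, IsRefl p hpm t) ∧ l.length = k ∧ l.prod = w}

/-- The order `≤_f` determined by a subadditive function `f`. -/
def leF (f : GW m n → ℕ) (x y : GW m n) : Prop := f x + f (x⁻¹ * y) = f y

/-- The interval `[id, w]_f` inside the poset `(G(m,p,n), ≤_f)`. -/
def interval (p : ℕ) (hpm : p ∣ m) (f : GW m n → ℕ) (w : GW m n) : Set (GW m n) :=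
  {u | Gmem p hpm u ∧ leF f u w}

/-- A vector `v ∈ ℂⁿ` is regular for `G(m,p,n)` if it is fixed by no reflection. -/
def IsRegularVec (p : ℕ) (hpm : p ∣ m) (v : Fin n → ℂ) : Prop :=
  ∀ t : GW m n, IsRefl p hpm t → (toMatrix t).mulVec v ≠ v

/-- An element `w ∈ G(m,p,n)` is regular if it has an eigenvector that is a regular vector. -/
def IsRegularElt (p : ℕ) (hpm : p ∣ m) (w : GW m n) : Prop :=
  ∃ v : Fin n → ℂ, v ≠ 0 ∧ (∃ c : ℂ, (toMatrix w).mulVec v = c • v) ∧ IsRegularVec p hpm v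

end GW

namespace GW

variable {m n : ℕ}

/-- All cycles of the restriction `x|_A` (viewed as an element of `G(m,1,#A)`)
have weight `0`. -/
def allCyclesZero (x : GW m n) (A : Finset (Fin n)) : Prop :=
  ∀ C ∈ cyclesIn (restrict x A) A, cycWt (restrict x A) C = 0

/-- The restriction `x|_A` has exactly one cycle of weight `ω` while all its other
cycles have weight `0`. -/
def oneCycleOfWt (x : GW m n) (A : Finset (Fin n)) (ω : ZMod m) : Prop :=
  ∃ C₀ ∈ cyclesIn (restrict x A) A, cycWt (restrict x A) C₀ = ω ∧
    ∀ C ∈ cyclesIn (restrict x A) A, C ≠ C₀ → cycWt (restrict x A) C = 0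

/-- Case (i): `wt(w|_A) = 0` and all cycles of `u|_A` and of `u⁻¹w|_A` have weight 0. -/
def condI (u w : GW m n) (A : Finset (Fin n)) : Prop :=
  wtTot (restrict w A) = 0 ∧ allCyclesZero u A ∧ allCyclesZero (u⁻¹ * w) A

/-- Case (ii): `wt(u|_A) = wt(w|_A) ≠ 0`, exactly one cycle of `u|_A` has weight
`wt(w|_A)` while all its other cycles have weight 0, and all cycles of `u⁻¹w|_A` have
weight 0. -/
def condII (u w : GW m n) (A : Finset (Fin n)) : Prop :=
  wtTot (restrict u A) = wtTot (restrict w A) ∧ wtTot (restrict w A) ≠ 0 ∧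
    oneCycleOfWt u A (wtTot (restrict w A)) ∧ allCyclesZero (u⁻¹ * w) A

/-- Case (iii): `wt(u⁻¹w|_A) = wt(w|_A) ≠ 0`, exactly one cycle of `u⁻¹w|_A` has weight
`wt(w|_A)` while all its other cycles have weight 0, and all cycles of `u|_A` have
weight 0. -/
def condIII (u w : GW m n) (A : Finset (Fin n)) : Prop :=
  wtTot (restrict (u⁻¹ * w) A) = wtTot (restrict w A) ∧ wtTot (restrict w A) ≠ 0 ∧
    oneCycleOfWt (u⁻¹ * w) A (wtTot (restrict w A)) ∧ allCyclesZero u A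

end GW


open Equiv Finset

namespace Hur

variable {α : Type*} [Fintype α] [DecidableEq α]

open Classical in
/-- class of x under relation r -/
noncomputable def cls (r : α → α → Prop) (x : α) : Finset α := Finset.univ.filter (r x)

noncomputable def clsSet (r : α → α → Prop) : Finset (Finset α) := Finset.univ.image (cls r)

noncomputable def nc (r : α → α → Prop) : ℕ := (clsSet r).card

theorem mem_cls {r : α → α → Prop} {x y : α} : y ∈ cls r x ↔ r x y := by
  simp [cls]

theorem self_mem_cls {r : α → α → Prop} (h : Equivalence r) (x : α) : x ∈ cls r x :=
  mem_cls.mpr (h.refl x)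

theorem cls_eq_of_rel {r : α → α → Prop} (h : Equivalence r) {x y : α} (hxy : r x y) :
    cls r x = cls r y := by
  ext z; simp only [mem_cls]
  exact ⟨fun hz => h.trans (h.symm hxy) hz, fun hz => h.trans hxy hz⟩

theorem rel_of_cls_eq {r : α → α → Prop} (h : Equivalence r) {x y : α} (hxy : cls r x = cls r y) :
    r x y := by
  have := self_mem_cls h y
  rw [← hxy] at this
  exact mem_cls.mp this

theorem cls_eq_iff {r : α → α → Prop} (h : Equivalence r) {x y : α} :
    cls r x = cls r y ↔ r x y := ⟨rel_of_cls_eq h, cls_eq_of_rel h⟩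

theorem cls_mem_clsSet (r : α → α → Prop) (x : α) : cls r x ∈ clsSet r :=
  Finset.mem_image_of_mem _ (Finset.mem_univ x)

theorem mem_clsSet_iff {r : α → α → Prop} {C : Finset α} :
    C ∈ clsSet r ↔ ∃ x, cls r x = C := by
  simp [clsSet, eq_comm]

theorem cls_congr {r s : α → α → Prop} (h : ∀ x y, r x y ↔ s x y) : ∀ x, cls r x = cls s x := by
  intro x; ext y; simp [mem_cls, h]

theorem nc_congr {r s : α → α → Prop} (h : ∀ x y, r x y ↔ s x y) : nc r = nc s := by
  unfold nc clsSet
  congr 1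
  exact Finset.image_congr (fun x _ => cls_congr h x)

theorem nc_le_card (r : α → α → Prop) : nc r ≤ Fintype.card α := by
  calc nc r ≤ Finset.univ.card := Finset.card_image_le
  _ = Fintype.card α := Finset.card_univ

/-- if r ≤ s (both equivalences) then s has fewer classes -/
theorem nc_le_of_le {r s : α → α → Prop} (hr : Equivalence r) (hs : Equivalence s)
    (h : ∀ x y, r x y → s x y) : nc s ≤ nc r := by
  classical
  have key : ∀ x, (Finset.univ.filter fun y => ∃ z ∈ cls r x, s z y) = cls s x := by
    intro x; ext y
    simp only [Finset.mem_filter, Finset.mem_univ, true_and, mem_cls]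
    constructor
    · rintro ⟨z, hz, hzy⟩
      exact hs.trans (h _ _ hz) hzy
    · intro hxy; exact ⟨x, hr.refl x, hxy⟩
  have him : clsSet s = (clsSet r).image fun C => Finset.univ.filter fun y => ∃ z ∈ C, s z y := by
    ext C
    simp only [mem_clsSet_iff, Finset.mem_image]
    constructor
    · rintro ⟨x, rfl⟩
      exact ⟨cls r x, ⟨x, rfl⟩, key x⟩
    · rintro ⟨D, ⟨x, rfl⟩, rfl⟩
      exact ⟨x, (key x).symm⟩
  rw [nc, him]
  exact Finset.card_image_le

theorem clsSet_disjoint {r : α → α → Prop} (h : Equivalence r) {C D : Finset α}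
    (hC : C ∈ clsSet r) (hD : D ∈ clsSet r) (hne : C ≠ D) : Disjoint C D := by
  obtain ⟨x, rfl⟩ := mem_clsSet_iff.mp hC
  obtain ⟨y, rfl⟩ := mem_clsSet_iff.mp hD
  rw [Finset.disjoint_left]
  intro z hzx hzy
  exact hne (cls_eq_of_rel h (h.trans (mem_cls.mp hzx) (h.symm (mem_cls.mp hzy))))

theorem clsSet_biUnion (r : α → α → Prop) (h : Equivalence r) :
    (clsSet r).biUnion id = Finset.univ := by
  ext x
  simp only [Finset.mem_biUnion, id, Finset.mem_univ, iff_true]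
  exact ⟨cls r x, cls_mem_clsSet r x, self_mem_cls h x⟩

theorem sum_clsSet_card {r : α → α → Prop} (h : Equivalence r) :
    ∑ C ∈ clsSet r, C.card = Fintype.card α := by
  classical
  rw [← Finset.card_biUnion (fun C hC D hD hne => clsSet_disjoint h hC hD hne)]
  have h2 : ((clsSet r).biUnion fun C => C) = Finset.univ := clsSet_biUnion r h
  rw [h2, Finset.card_univ]

theorem nc_eq_card_of_eq {r : α → α → Prop} (h : ∀ x y, r x y ↔ x = y) :
    nc r = Fintype.card α := by
  have : ∀ x, cls r x = {x} := by
    intro x; ext y; simp [mem_cls, h, eq_comm]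
  unfold nc clsSet
  rw [Finset.image_congr (fun x _ => this x)]
  rw [Finset.card_image_of_injective _ (fun a b hab => Finset.singleton_injective hab)]
  exact Finset.card_univ

/-- join of equivalence r with the pair (a,b) -/
def jn (r : α → α → Prop) (a b : α) (x y : α) : Prop :=
  r x y ∨ (r x a ∧ r b y) ∨ (r x b ∧ r a y)

theorem jn_equivalence {r : α → α → Prop} (h : Equivalence r) (a b : α) :
    Equivalence (jn r a b) := by
  constructor
  · intro x; exact Or.inl (h.refl x)
  · rintro x y (hxy | ⟨h1, h2⟩ | ⟨h1, h2⟩)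
    · exact Or.inl (h.symm hxy)
    · exact Or.inr (Or.inr ⟨h.symm h2, h.symm h1⟩)
    · exact Or.inr (Or.inl ⟨h.symm h2, h.symm h1⟩)
  · rintro x y z (hxy | ⟨h1, h2⟩ | ⟨h1, h2⟩) (hyz | ⟨h3, h4⟩ | ⟨h3, h4⟩)
    · exact Or.inl (h.trans hxy hyz)
    · exact Or.inr (Or.inl ⟨h.trans hxy h3, h4⟩)
    · exact Or.inr (Or.inr ⟨h.trans hxy h3, h4⟩)
    · exact Or.inr (Or.inl ⟨h1, h.trans h2 hyz⟩)
    · exact Or.inl (h.trans (h.trans h1 (h.symm (h.trans h2 h3))) h4)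
    · exact Or.inl (h.trans h1 h4)
    · exact Or.inr (Or.inr ⟨h1, h.trans h2 hyz⟩)
    · exact Or.inl (h.trans h1 h4)
    · exact Or.inl (h.trans (h.trans h1 (h.symm (h.trans h2 h3))) h4)

theorem le_jn {r : α → α → Prop} (a b x y : α) (hxy : r x y) : jn r a b x y := Or.inl hxy

theorem jn_rel {r : α → α → Prop} (h : Equivalence r) (a b : α) : jn r a b a b :=
  Or.inr (Or.inl ⟨h.refl a, h.refl b⟩)

theorem jn_eq_of_rel {r : α → α → Prop} (h : Equivalence r) {a b : α} (hab : r a b) :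
    ∀ x y, jn r a b x y ↔ r x y := by
  intro x y
  constructor
  · rintro (hxy | ⟨h1, h2⟩ | ⟨h1, h2⟩)
    · exact hxy
    · exact h.trans h1 (h.trans hab h2)
    · exact h.trans h1 (h.trans (h.symm hab) h2)
  · exact Or.inl

theorem cls_jn_of_not {r : α → α → Prop} (h : Equivalence r) {a b z : α}
    (hza : ¬ r z a) (hzb : ¬ r z b) : cls (jn r a b) z = cls r z := by
  ext v
  simp only [mem_cls, jn]
  constructor
  · rintro (hv | ⟨h1, _⟩ | ⟨h1, _⟩)
    · exact hv
    · exact absurd h1 hza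
    · exact absurd h1 hzb
  · exact Or.inl

theorem cls_jn_of_rel_left {r : α → α → Prop} (h : Equivalence r) {a b z : α}
    (hza : r a z) (hab : ¬ r a b) : cls (jn r a b) z = cls r a ∪ cls r b := by
  ext v
  simp only [mem_cls, jn, Finset.mem_union]
  constructor
  · rintro (hv | ⟨h1, h2⟩ | ⟨h1, h2⟩)
    · exact Or.inl (h.trans hza hv)
    · exact Or.inr h2
    · exact absurd (h.trans hza h1) hab
  · rintro (hv | hv)
    · exact Or.inl (h.trans (h.symm hza) hv)
    · exact Or.inr (Or.inl ⟨h.symm hza, hv⟩)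

theorem nc_jn {r : α → α → Prop} (h : Equivalence r) {a b : α} (hab : ¬ r a b) :
    nc (jn r a b) + 1 = nc r := by
  classical
  have hcls : ∀ z, cls (jn r a b) z =
      if r a z ∨ r b z then cls r a ∪ cls r b else cls r z := by
    intro z
    by_cases hz : r a z ∨ r b z
    · rw [if_pos hz]
      rcases hz with hz | hz
      · exact cls_jn_of_rel_left h hz hab
      · have := cls_jn_of_rel_left (r := r) h (a := b) (b := a) hz (fun hc => hab (h.symm hc))
        have hcongr : cls (jn r a b) z = cls (jn r b a) z := by
          ext v; simp only [mem_cls, jn]; tauto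
        rw [hcongr, this, Finset.union_comm]
    · rw [if_neg hz]
      push_neg at hz
      exact cls_jn_of_not h (fun hc => hz.1 (h.symm hc)) (fun hc => hz.2 (h.symm hc))
  have hset : clsSet (jn r a b) =
      insert (cls r a ∪ cls r b) (((clsSet r).erase (cls r a)).erase (cls r b)) := by
    ext C
    simp only [mem_clsSet_iff, Finset.mem_insert, Finset.mem_erase]
    constructor
    · rintro ⟨z, rfl⟩
      rw [hcls z]
      by_cases hz : r a z ∨ r b z
      · rw [if_pos hz]; exact Or.inl rfl
      · rw [if_neg hz]
        push_neg at hz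
        refine Or.inr ⟨?_, ?_, ⟨z, rfl⟩⟩
        · intro hc; exact hz.2 (h.symm (rel_of_cls_eq h hc))
        · intro hc; exact hz.1 (h.symm (rel_of_cls_eq h hc))
    · rintro (rfl | ⟨hCb, hCa, z, rfl⟩)
      · exact ⟨a, by rw [hcls a, if_pos (Or.inl (h.refl a))]⟩
      · refine ⟨z, ?_⟩
        rw [hcls z, if_neg]
        push_neg
        exact ⟨fun hc => hCa (cls_eq_of_rel h (h.symm hc)),
               fun hc => hCb (cls_eq_of_rel h (h.symm hc))⟩
  rw [nc, hset]
  have hanb : cls r a ≠ cls r b := fun hc => hab (rel_of_cls_eq h hc)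
  have hb_mem : cls r b ∈ clsSet r := cls_mem_clsSet r b
  have ha_mem : cls r a ∈ ((clsSet r).erase (cls r b)) :=
    Finset.mem_erase.mpr ⟨hanb, cls_mem_clsSet r a⟩
  have hnotin : (cls r a ∪ cls r b) ∉ ((clsSet r).erase (cls r a)).erase (cls r b) := by
    intro hc
    obtain ⟨z, hz⟩ := mem_clsSet_iff.mp (Finset.mem_of_mem_erase (Finset.mem_of_mem_erase hc))
    have haz : a ∈ cls r z := hz ▸ Finset.mem_union_left _ (self_mem_cls h a)
    have : cls r z = cls r a := cls_eq_of_rel h (mem_cls.mp haz)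
    rw [Finset.mem_erase, Finset.mem_erase] at hc
    exact hc.2.1 (hz ▸ this ▸ rfl)
  rw [Finset.card_insert_of_notMem hnotin]
  rw [Finset.erase_right_comm, Finset.card_erase_of_mem ha_mem, Finset.card_erase_of_mem hb_mem]
  have h2 : 2 ≤ (clsSet r).card := by
    have : {cls r a, cls r b} ⊆ clsSet r := by
      intro C hC
      rcases Finset.mem_insert.mp hC with rfl | hC
      · exact cls_mem_clsSet r a
      · rw [Finset.mem_singleton.mp hC]; exact cls_mem_clsSet r b
    calc 2 = ({cls r a, cls r b} : Finset (Finset α)).card := by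
            rw [Finset.card_insert_of_notMem (by simp [hanb]), Finset.card_singleton]
    _ ≤ (clsSet r).card := Finset.card_le_card this
  have hnc : nc r = (clsSet r).card := rfl
  omega

/-- EqvGen minimality -/
theorem eqvGen_le {r s : α → α → Prop} (hs : Equivalence s) (h : ∀ x y, r x y → s x y) :
    ∀ x y, Relation.EqvGen r x y → s x y := by
  intro x y hxy
  induction hxy with
  | rel a b h' => exact h _ _ h'
  | refl a => exact hs.refl a
  | symm a b _ ih => exact hs.symm ih
  | trans a b c _ _ ih1 ih2 => exact hs.trans ih1 ih2

section Perm

variable (σ τ : Equiv.Perm α)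

/-- number of cycles of a permutation -/
noncomputable def pc (σ : Equiv.Perm α) : ℕ := nc σ.SameCycle

theorem sameCycle_equivalence (σ : Equiv.Perm α) : Equivalence σ.SameCycle :=
  ⟨fun x => Equiv.Perm.SameCycle.refl σ x, fun h => h.symm, fun h1 h2 => h1.trans h2⟩

/-- if R is an equivalence with R z (τ z) for all z, then SameCycle τ ≤ R -/
theorem step_lemma {τ : Equiv.Perm α} {R : α → α → Prop} (hR : Equivalence R)
    (hstep : ∀ z, R z (τ z)) {x y : α} (h : τ.SameCycle x y) : R x y := by
  obtain ⟨i, _, hi⟩ := Equiv.Perm.SameCycle.exists_pow_eq' h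
  subst hi
  clear * - hR hstep
  induction i with
  | zero => exact hR.refl x
  | succ k ih =>
      rw [pow_succ', Equiv.Perm.mul_apply]
      exact hR.trans ih (hstep _)

theorem closed_lemma {τ : Equiv.Perm α} {S : Finset α} (hS : ∀ z ∈ S, τ z ∈ S)
    {a y : α} (ha : a ∈ S) (h : τ.SameCycle a y) : y ∈ S := by
  obtain ⟨i, _, hi⟩ := Equiv.Perm.SameCycle.exists_pow_eq' h
  subst hi
  clear * - hS ha
  induction i with
  | zero => simpa using ha
  | succ k ih =>
      rw [pow_succ', Equiv.Perm.mul_apply]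
      exact hS _ ih

theorem merge_sc {σ : Equiv.Perm α} {a b : α} (hab : a ≠ b) (h : ¬ σ.SameCycle a b) :
    (Equiv.swap a b * σ).SameCycle a b := by
  classical
  set τ := Equiv.swap a b * σ with hτ
  have hP : ∃ i, 0 < i ∧ (σ ^ i) a = a :=
    ⟨orderOf σ, orderOf_pos σ, by rw [pow_orderOf_eq_one]; rfl⟩
  set k := Nat.find hP with hk
  obtain ⟨hk0, hka⟩ : 0 < k ∧ (σ ^ k) a = a := Nat.find_spec hP
  have hmin : ∀ i, i < k → ¬(0 < i ∧ (σ ^ i) a = a) := fun i hi => Nat.find_min hP hi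
  have key : ∀ i, i < k → (τ ^ i) a = (σ ^ i) a := by
    intro i hi
    induction i with
    | zero => simp
    | succ j ih =>
        have hj : j < k := lt_trans (Nat.lt_succ_self j) hi
        rw [pow_succ', Equiv.Perm.mul_apply, ih hj, hτ, Equiv.Perm.mul_apply]
        have h1 : (σ ^ (j+1)) a = σ ((σ ^ j) a) := by rw [pow_succ', Equiv.Perm.mul_apply]
        rw [← h1]
        have hne_a : (σ ^ (j+1)) a ≠ a := fun hc => hmin (j+1) hi ⟨Nat.succ_pos j, hc⟩
        have hne_b : (σ ^ (j+1)) a ≠ b := fun hc =>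
          h ⟨((j:ℤ)+1), by rw [show ((j:ℤ)+1) = ((j+1 : ℕ) : ℤ) by push_cast; ring, zpow_natCast]; exact hc⟩
        rw [Equiv.swap_apply_of_ne_of_ne hne_a hne_b]
  have hfin : (τ ^ k) a = b := by
    obtain ⟨k', hk'⟩ : ∃ k', k = k' + 1 := ⟨k - 1, by omega⟩
    rw [hk', pow_succ', Equiv.Perm.mul_apply, key k' (by omega), hτ, Equiv.Perm.mul_apply]
    have h1 : σ ((σ ^ k') a) = (σ ^ (k'+1)) a := by rw [pow_succ', Equiv.Perm.mul_apply]
    rw [h1, ← hk', hka, Equiv.swap_apply_left]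
  exact ⟨(k : ℤ), by rw [zpow_natCast]; exact hfin⟩

theorem splitsep {σ : Equiv.Perm α} {a b : α} (hab : a ≠ b) (h : σ.SameCycle a b) :
    ¬ (Equiv.swap a b * σ).SameCycle a b := by
  classical
  set τ := Equiv.swap a b * σ with hτ
  have hP : ∃ i, 0 < i ∧ (σ ^ i) a = b := by
    obtain ⟨i, _, hi⟩ := h.exists_pow_eq'
    refine ⟨i, ?_, hi⟩
    rcases Nat.eq_zero_or_pos i with rfl | hpos
    · simp only [pow_zero, Equiv.Perm.coe_one, id_eq] at hi; exact absurd hi hab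
    · exact hpos
  set j := Nat.find hP with hj
  obtain ⟨hj0, hjb⟩ : 0 < j ∧ (σ ^ j) a = b := Nat.find_spec hP
  have hmin : ∀ i, i < j → ¬(0 < i ∧ (σ ^ i) a = b) := fun i hi => Nat.find_min hP hi
  set S : Finset α := (Finset.range j).image (fun i => (σ ^ i) a) with hS
  have haS : a ∈ S := Finset.mem_image.mpr ⟨0, Finset.mem_range.mpr hj0, by simp⟩
  have hbS : b ∉ S := by
    intro hc
    obtain ⟨i, hi, hib⟩ := Finset.mem_image.mp hc
    rw [Finset.mem_range] at hi
    rcases Nat.eq_zero_or_pos i with rfl | hpos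
    · simp only [pow_zero, Equiv.Perm.coe_one, id_eq] at hib; exact hab hib
    · exact hmin i hi ⟨hpos, hib⟩
  have hclosed : ∀ z ∈ S, τ z ∈ S := by
    intro z hz
    obtain ⟨i, hi, rfl⟩ := Finset.mem_image.mp hz
    rw [Finset.mem_range] at hi
    have happ : τ ((σ ^ i) a) = Equiv.swap a b ((σ ^ (i+1)) a) := by
      rw [hτ, Equiv.Perm.mul_apply, pow_succ', Equiv.Perm.mul_apply]
    rcases Nat.lt_or_ge (i+1) j with hlt | hge
    · have hne_b : (σ ^ (i+1)) a ≠ b := fun hc => hmin (i+1) hlt ⟨Nat.succ_pos i, hc⟩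
      by_cases hne_a : (σ ^ (i+1)) a = a
      · exfalso
        have heq : (σ ^ j) a = (σ ^ (j - (i+1))) a := by
          conv_lhs => rw [show j = (j - (i+1)) + (i+1) by omega]
          rw [pow_add, Equiv.Perm.mul_apply, hne_a]
        exact hmin (j - (i+1)) (by omega) ⟨by omega, by rw [← heq, hjb]⟩
      · rw [happ, Equiv.swap_apply_of_ne_of_ne hne_a hne_b]
        exact Finset.mem_image.mpr ⟨i+1, Finset.mem_range.mpr hlt, rfl⟩
    · have hij : i + 1 = j := by omega
      rw [happ, hij, hjb, Equiv.swap_apply_right]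
      exact haS
  intro hc
  exact hbS (closed_lemma hclosed haS hc)

theorem sigma_eq_swap_tau {σ : Equiv.Perm α} {a b : α} :
    ∀ z, σ z = Equiv.swap a b ((Equiv.swap a b * σ) z) := by
  intro z
  rw [Equiv.Perm.mul_apply, Equiv.swap_apply_self]

theorem merge_char {σ : Equiv.Perm α} {a b : α} (hab : a ≠ b) (h : ¬ σ.SameCycle a b) :
    ∀ x y, (Equiv.swap a b * σ).SameCycle x y ↔ jn σ.SameCycle a b x y := by
  set τ := Equiv.swap a b * σ with hτ
  have hEs := sameCycle_equivalence σ
  have hEt := sameCycle_equivalence τ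
  have hmerge : τ.SameCycle a b := merge_sc hab h
  have hsig : ∀ z, σ z = Equiv.swap a b (τ z) := fun z => sigma_eq_swap_tau z
  have hστ : ∀ x y, σ.SameCycle x y → τ.SameCycle x y := by
    intro x y hxy
    refine step_lemma (τ := σ) hEt ?_ hxy
    intro z
    have hz : τ.SameCycle z (τ z) := ⟨1, by simp⟩
    by_cases hza : τ z = a
    · have hσz : σ z = b := by rw [hsig z, hza, Equiv.swap_apply_left]
      rw [hσz]
      exact hEt.trans (hza ▸ hz) hmerge
    · by_cases hzb : τ z = b
      · have hσz : σ z = a := by rw [hsig z, hzb, Equiv.swap_apply_right]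
        rw [hσz]
        exact hEt.trans (hzb ▸ hz) (hEt.symm hmerge)
      · have hσz : σ z = τ z := by
          rw [hsig z, Equiv.swap_apply_of_ne_of_ne hza hzb]
        rw [hσz]; exact hz
  intro x y
  constructor
  · intro hxy
    refine step_lemma (τ := τ) (jn_equivalence hEs a b) ?_ hxy
    intro z
    have hz : σ.SameCycle z (σ z) := ⟨1, by simp⟩
    have happ : τ z = Equiv.swap a b (σ z) := by rw [hτ, Equiv.Perm.mul_apply]
    by_cases hza : σ z = a
    · have : τ z = b := by rw [happ, hza, Equiv.swap_apply_left]
      rw [this]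
      exact Or.inr (Or.inl ⟨hza ▸ hz, hEs.refl b⟩)
    · by_cases hzb : σ z = b
      · have : τ z = a := by rw [happ, hzb, Equiv.swap_apply_right]
        rw [this]
        exact Or.inr (Or.inr ⟨hzb ▸ hz, hEs.refl a⟩)
      · have : τ z = σ z := by rw [happ, Equiv.swap_apply_of_ne_of_ne hza hzb]
        rw [this]; exact Or.inl hz
  · rintro (hxy | ⟨h1, h2⟩ | ⟨h1, h2⟩)
    · exact hστ _ _ hxy
    · exact hEt.trans (hστ _ _ h1) (hEt.trans hmerge (hστ _ _ h2))
    · exact hEt.trans (hστ _ _ h1) (hEt.trans (hEt.symm hmerge) (hστ _ _ h2))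

theorem merge_count {σ : Equiv.Perm α} {a b : α} (hab : a ≠ b) (h : ¬ σ.SameCycle a b) :
    pc (Equiv.swap a b * σ) + 1 = pc σ := by
  have := nc_congr (merge_char hab h)
  rw [pc, this]
  exact nc_jn (sameCycle_equivalence σ) h

theorem split_count {σ : Equiv.Perm α} {a b : α} (hab : a ≠ b) (h : σ.SameCycle a b) :
    pc (Equiv.swap a b * σ) = pc σ + 1 := by
  have hsep := splitsep hab h
  have := merge_count hab hsep
  rw [← mul_assoc, Equiv.swap_mul_self, one_mul] at this
  exact this.symm

theorem split_le {σ : Equiv.Perm α} {a b : α} (h : σ.SameCycle a b) :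
    ∀ x y, (Equiv.swap a b * σ).SameCycle x y → σ.SameCycle x y := by
  intro x y hxy
  have hEs := sameCycle_equivalence σ
  refine step_lemma (τ := Equiv.swap a b * σ) hEs ?_ hxy
  intro z
  have hz : σ.SameCycle z (σ z) := ⟨1, by simp⟩
  have happ : (Equiv.swap a b * σ) z = Equiv.swap a b (σ z) := Equiv.Perm.mul_apply _ _ _
  by_cases hza : σ z = a
  · have : (Equiv.swap a b * σ) z = b := by rw [happ, hza, Equiv.swap_apply_left]
    rw [this]
    exact hEs.trans (hza ▸ hz) h
  · by_cases hzb : σ z = b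
    · have : (Equiv.swap a b * σ) z = a := by rw [happ, hzb, Equiv.swap_apply_right]
      rw [this]
      exact hEs.trans (hzb ▸ hz) (hEs.symm h)
    · have : (Equiv.swap a b * σ) z = σ z := by rw [happ, Equiv.swap_apply_of_ne_of_ne hza hzb]
      rw [this]; exact hz

theorem pc_one : pc (1 : Equiv.Perm α) = Fintype.card α :=
  nc_eq_card_of_eq (fun x y => Equiv.Perm.sameCycle_one)

theorem pc_le (σ : Equiv.Perm α) : pc σ ≤ Fintype.card α := nc_le_card _

theorem factorization (σ : Equiv.Perm α) :
    ∃ l : List (α × α), (l.map fun p => Equiv.swap p.1 p.2).prod = σ ∧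
      l.length + pc σ = Fintype.card α ∧
      ∀ p ∈ l, p.1 ≠ p.2 ∧ σ.SameCycle p.1 p.2 := by
  generalize hmeas : Fintype.card α - pc σ = N
  induction N generalizing σ with
  | zero =>
      by_cases h1 : σ = 1
      · subst h1
        exact ⟨[], by simp, by simp [pc_one], by simp⟩
      · exfalso
        obtain ⟨a, ha⟩ : ∃ a, σ a ≠ a := by
          by_contra hc
          push_neg at hc
          exact h1 (Equiv.ext hc)
        have hsc : σ.SameCycle a (σ a) := ⟨1, by simp⟩
        have := split_count (Ne.symm ha) hsc
        have hle := pc_le (Equiv.swap a (σ a) * σ)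
        omega
  | succ N ih =>
      have h1 : σ ≠ 1 := by
        intro hc; subst hc
        rw [pc_one] at hmeas; omega
      obtain ⟨a, ha⟩ : ∃ a, σ a ≠ a := by
        by_contra hc
        push_neg at hc
        exact h1 (Equiv.ext hc)
      have hsc : σ.SameCycle a (σ a) := ⟨1, by simp⟩
      set σ' := Equiv.swap a (σ a) * σ with hσ'
      have hpc : pc σ' = pc σ + 1 := split_count (Ne.symm ha) hsc
      have hle := pc_le σ'
      obtain ⟨l', hprod, hlen, hmem⟩ := ih σ' (by omega)
      refine ⟨(a, σ a) :: l', ?_, ?_, ?_⟩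
      · simp only [List.map_cons, List.prod_cons, hprod]
        rw [hσ', ← mul_assoc, Equiv.swap_mul_self, one_mul]
      · simp only [List.length_cons]; omega
      · rintro p hp
        rcases List.mem_cons.mp hp with rfl | hp'
        · exact ⟨Ne.symm ha, hsc⟩
        · obtain ⟨hne, hsc'⟩ := hmem p hp'
          exact ⟨hne, split_le hsc _ _ hsc'⟩

/-- the relation generated by a list of pairs -/
def pairRel (l : List (α × α)) (x y : α) : Prop :=
  ∃ p ∈ l, (x = p.1 ∧ y = p.2) ∨ (x = p.2 ∧ y = p.1)

def El (l : List (α × α)) : α → α → Prop := Relation.EqvGen (pairRel l)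

theorem El_equiv (l : List (α × α)) : Equivalence (El l) :=
  Relation.EqvGen.is_equivalence _

theorem El_mono {l l' : List (α × α)} (h : ∀ p ∈ l, p ∈ l') {x y : α} (hxy : El l x y) :
    El l' x y :=
  Relation.EqvGen.mono (r := pairRel l) (p := pairRel l') (fun a b ⟨p, hp, hor⟩ => ⟨p, h p hp, hor⟩) x y hxy

theorem prod_rel (l : List (α × α)) :
    ∀ z, El l z ((l.map fun p => Equiv.swap p.1 p.2).prod z) := by
  induction l with
  | nil => intro z; simp only [List.map_nil, List.prod_nil, Equiv.Perm.coe_one, id_eq]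
           exact (El_equiv []).refl z
  | cons p l ih =>
      intro z
      simp only [List.map_cons, List.prod_cons, Equiv.Perm.mul_apply]
      set w := (l.map fun p => Equiv.swap p.1 p.2).prod z with hw
      have h1 : El (p :: l) z w := El_mono (fun q hq => List.mem_cons_of_mem p hq) (ih z)
      refine (El_equiv _).trans h1 ?_
      by_cases hw1 : w = p.1
      · rw [hw1, Equiv.swap_apply_left]
        exact Relation.EqvGen.rel _ _ ⟨p, List.mem_cons_self, Or.inl ⟨rfl, rfl⟩⟩
      · by_cases hw2 : w = p.2
        · rw [hw2, Equiv.swap_apply_right]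
          exact Relation.EqvGen.rel _ _ ⟨p, List.mem_cons_self, Or.inr ⟨rfl, rfl⟩⟩
        · rw [Equiv.swap_apply_of_ne_of_ne hw1 hw2]
          exact (El_equiv _).refl w

theorem sc_prod_le (l : List (α × α)) {x y : α}
    (h : ((l.map fun p => Equiv.swap p.1 p.2).prod).SameCycle x y) : El l x y :=
  step_lemma (El_equiv l) (prod_rel l) h

theorem hurwitz_list (l : List (α × α)) (hne : ∀ p ∈ l, p.1 ≠ p.2) :
    Fintype.card α + pc ((l.map fun p => Equiv.swap p.1 p.2).prod) ≤
      l.length + 2 * nc (El l) := by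
  induction l with
  | nil =>
      simp only [List.map_nil, List.prod_nil, List.length_nil, zero_add]
      have h1 : pc (1 : Equiv.Perm α) = Fintype.card α := pc_one
      have h2 : nc (El ([] : List (α × α))) = Fintype.card α := by
        apply nc_eq_card_of_eq
        intro x y
        constructor
        · intro hxy
          exact eqvGen_le ⟨fun _ => rfl, fun h => h.symm, fun h1 h2 => h1.trans h2⟩
            (fun a b ⟨p, hp, _⟩ => absurd hp List.not_mem_nil) x y hxy
        · rintro rfl; exact (El_equiv _).refl x
      omega
  | cons p l ih =>
      have hp1 : p.1 ≠ p.2 := hne p (List.mem_cons_self)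
      have ihl := ih (fun q hq => hne q (List.mem_cons_of_mem p hq))
      set P := (l.map fun q => Equiv.swap q.1 q.2).prod with hP
      have hprodc : ((p :: l).map fun q => Equiv.swap q.1 q.2).prod = Equiv.swap p.1 p.2 * P := by
        simp [hP]
      rw [hprodc]
      have hbase_le : ∀ x y, pairRel (p :: l) x y → jn (El l) p.1 p.2 x y := by
        rintro x y ⟨q, hq, hor⟩
        rcases List.mem_cons.mp hq with rfl | hq'
        · rcases hor with ⟨rfl, rfl⟩ | ⟨rfl, rfl⟩
          · exact jn_rel (El_equiv l) _ _
          · exact (jn_equivalence (El_equiv l) _ _).symm (jn_rel (El_equiv l) _ _)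
        · exact Or.inl (Relation.EqvGen.rel _ _ ⟨q, hq', hor⟩)
      have hchar : ∀ x y, El (p :: l) x y ↔ jn (El l) p.1 p.2 x y := by
        intro x y
        constructor
        · intro hxy
          exact eqvGen_le (jn_equivalence (El_equiv l) p.1 p.2) hbase_le x y hxy
        · rintro (hxy | ⟨h1, h2⟩ | ⟨h1, h2⟩)
          · exact El_mono (fun q hq => List.mem_cons_of_mem p hq) hxy
          · have hrel : El (p :: l) p.1 p.2 :=
              Relation.EqvGen.rel _ _ ⟨p, List.mem_cons_self, Or.inl ⟨rfl, rfl⟩⟩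
            exact (El_equiv _).trans (El_mono (fun q hq => List.mem_cons_of_mem p hq) h1)
              ((El_equiv _).trans hrel (El_mono (fun q hq => List.mem_cons_of_mem p hq) h2))
          · have hrel : El (p :: l) p.1 p.2 :=
              Relation.EqvGen.rel _ _ ⟨p, List.mem_cons_self, Or.inl ⟨rfl, rfl⟩⟩
            exact (El_equiv _).trans (El_mono (fun q hq => List.mem_cons_of_mem p hq) h1)
              ((El_equiv _).trans ((El_equiv _).symm hrel)
                (El_mono (fun q hq => List.mem_cons_of_mem p hq) h2))
      by_cases hsc : P.SameCycle p.1 p.2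
      · have hpc : pc (Equiv.swap p.1 p.2 * P) = pc P + 1 := split_count hp1 hsc
        have hElrel : El l p.1 p.2 := sc_prod_le l hsc
        have hnceq : nc (El (p :: l)) = nc (El l) := by
          apply nc_congr
          intro x y
          rw [hchar x y, jn_eq_of_rel (El_equiv l) hElrel]
        simp only [List.length_cons]
        omega
      · have hpc : pc (Equiv.swap p.1 p.2 * P) + 1 = pc P := merge_count hp1 hsc
        have hnceq : nc (El (p :: l)) = nc (jn (El l) p.1 p.2) := nc_congr hchar
        by_cases hEl : El l p.1 p.2
        · have : nc (jn (El l) p.1 p.2) = nc (El l) :=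
            nc_congr (jn_eq_of_rel (El_equiv l) hEl)
          simp only [List.length_cons]
          omega
        · have := nc_jn (El_equiv l) hEl
          simp only [List.length_cons]
          omega

/-- the partition relation generated by cycles of x and of w -/
def QQ (x w : Equiv.Perm α) : α → α → Prop :=
  Relation.EqvGen (fun s t => x.SameCycle s t ∨ w.SameCycle s t)

theorem QQ_equiv (x w : Equiv.Perm α) : Equivalence (QQ x w) :=
  Relation.EqvGen.is_equivalence _

theorem hurwitz (x y : Equiv.Perm α) :
    Fintype.card α + pc (x * y) + pc x + pc y ≤
      2 * Fintype.card α + 2 * nc (QQ x (x * y)) := by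
  obtain ⟨l₁, hprod₁, hlen₁, hmem₁⟩ := factorization x
  obtain ⟨l₂, hprod₂, hlen₂, hmem₂⟩ := factorization y
  set l := l₁ ++ l₂ with hl
  have hprod : (l.map fun p => Equiv.swap p.1 p.2).prod = x * y := by
    rw [hl, List.map_append, List.prod_append, hprod₁, hprod₂]
  have hne : ∀ p ∈ l, p.1 ≠ p.2 := by
    intro p hp
    rcases List.mem_append.mp hp with hp | hp
    · exact (hmem₁ p hp).1
    · exact (hmem₂ p hp).1
  have hlist := hurwitz_list l hne
  rw [hprod] at hlist
  have hQle : nc (El l) ≤ nc (QQ x (x * y)) := by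
    apply nc_le_of_le (QQ_equiv x (x * y)) (El_equiv l)
    intro s t hst
    refine eqvGen_le (El_equiv l) ?_ s t hst
    rintro u v (huv | huv)
    · rw [← hprod₁] at huv
      exact El_mono (fun q hq => List.mem_append.mpr (Or.inl hq)) (sc_prod_le l₁ huv)
    · rw [← hprod] at huv
      exact sc_prod_le l huv
  have hlen : l.length = l₁.length + l₂.length := List.length_append
  omega

end Perm

end Hur

namespace GW

variable {m n : ℕ}

theorem cycleOf_eq_cls (w : GW m n) (i : Fin n) :
    GW.cycleOf w i = Hur.cls w.perm.SameCycle i := by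
  ext j; simp [GW.cycleOf, Hur.mem_cls]

theorem cycles_eq_clsSet (w : GW m n) : GW.cycles w = Hur.clsSet w.perm.SameCycle := by
  unfold GW.cycles Hur.clsSet
  exact Finset.image_congr (fun i _ => cycleOf_eq_cls w i)

theorem numCycles_eq_pc (w : GW m n) : GW.numCycles w = Hur.pc w.perm := by
  unfold GW.numCycles Hur.pc Hur.nc
  rw [cycles_eq_clsSet]

/-- invariance of a set under a permutation -/
abbrev Inv (σ : Equiv.Perm (Fin n)) (A : Finset (Fin n)) : Prop := ∀ i, σ i ∈ A ↔ i ∈ A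

theorem Inv.inv {σ : Equiv.Perm (Fin n)} {A : Finset (Fin n)} (h : Inv σ A) : Inv σ⁻¹ A := by
  intro i
  have := h (σ⁻¹ i)
  rw [show σ (σ⁻¹ i) = i from Equiv.apply_symm_apply σ i] at this
  exact this.symm

theorem Inv.mul {σ τ : Equiv.Perm (Fin n)} {A : Finset (Fin n)} (hσ : Inv σ A) (hτ : Inv τ A) :
    Inv (σ * τ) A := by
  intro i
  rw [Equiv.Perm.mul_apply, hσ, hτ]

theorem restrictPerm_apply {σ : Equiv.Perm (Fin n)} {A : Finset (Fin n)} (hA : Inv σ A) (i : Fin n) :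
    GW.restrictPerm σ A i = if i ∈ A then σ i else i := by
  rw [GW.restrictPerm, dif_pos hA]
  rfl

theorem restrictPerm_inv_apply {σ : Equiv.Perm (Fin n)} {A : Finset (Fin n)} (hA : Inv σ A) (i : Fin n) :
    (GW.restrictPerm σ A)⁻¹ i = if i ∈ A then σ⁻¹ i else i := by
  rw [GW.restrictPerm, dif_pos hA]
  rfl

theorem inv_mem_of_sameCycle {σ : Equiv.Perm (Fin n)} {A : Finset (Fin n)} (hA : Inv σ A)
    {i j : Fin n} (hi : i ∈ A) (h : σ.SameCycle i j) : j ∈ A :=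
  Hur.closed_lemma (fun z hz => (hA z).mpr hz) hi h

theorem sameCycle_restrictPerm_iff {σ : Equiv.Perm (Fin n)} {A : Finset (Fin n)} (hA : Inv σ A)
    {i j : Fin n} (hi : i ∈ A) :
    (GW.restrictPerm σ A).SameCycle i j ↔ σ.SameCycle i j := by
  constructor
  · intro h
    set R : Fin n → Fin n → Prop :=
      fun a b => (a ∈ A ∧ b ∈ A ∧ σ.SameCycle a b) ∨ (a ∉ A ∧ a = b) with hR
    have hEquiv : Equivalence R := by
      constructor
      · intro a
        by_cases ha : a ∈ A
        · exact Or.inl ⟨ha, ha, Equiv.Perm.SameCycle.refl σ a⟩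
        · exact Or.inr ⟨ha, rfl⟩
      · rintro a b (⟨h1, h2, h3⟩ | ⟨h1, rfl⟩)
        · exact Or.inl ⟨h2, h1, h3.symm⟩
        · exact Or.inr ⟨h1, rfl⟩
      · rintro a b c (⟨h1, h2, h3⟩ | ⟨h1, rfl⟩) (⟨h4, h5, h6⟩ | ⟨h4, rfl⟩)
        · exact Or.inl ⟨h1, h5, h3.trans h6⟩
        · exact Or.inl ⟨h1, h2, h3⟩
        · exact absurd h4 h1
        · exact Or.inr ⟨h1, rfl⟩
    have hstep : ∀ z, R z (GW.restrictPerm σ A z) := by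
      intro z
      rw [restrictPerm_apply hA]
      by_cases hz : z ∈ A
      · rw [if_pos hz]
        exact Or.inl ⟨hz, (hA z).mpr hz, ⟨1, by simp⟩⟩
      · rw [if_neg hz]
        exact Or.inr ⟨hz, rfl⟩
    rcases Hur.step_lemma hEquiv hstep h with ⟨_, _, hsc⟩ | ⟨hni, rfl⟩
    · exact hsc
    · exact absurd hi hni
  · intro h
    obtain ⟨t, _, ht⟩ := h.exists_pow_eq'
    subst ht
    clear * - hA hi
    induction t with
    | zero => exact Equiv.Perm.SameCycle.refl _ _
    | succ k ih =>
        have hk : (σ ^ k) i ∈ A := by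
          clear ih
          induction k with
          | zero => simpa using hi
          | succ k' ih' =>
              rw [pow_succ', Equiv.Perm.mul_apply]
              exact (hA _).mpr ih'
        have : (σ ^ (k+1)) i = GW.restrictPerm σ A ((σ ^ k) i) := by
          rw [restrictPerm_apply hA, if_pos hk, pow_succ', Equiv.Perm.mul_apply]
        rw [this]
        exact Equiv.Perm.SameCycle.trans ih ⟨1, by simp⟩

theorem sameCycle_restrictPerm_outside {σ : Equiv.Perm (Fin n)} {A : Finset (Fin n)}
    (hA : Inv σ A) {i j : Fin n} (hi : i ∉ A) :
    (GW.restrictPerm σ A).SameCycle i j ↔ i = j := by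
  constructor
  · intro h
    have hclosed : ∀ z ∈ ({i} : Finset (Fin n)), GW.restrictPerm σ A z ∈ ({i} : Finset (Fin n)) := by
      intro z hz
      rw [Finset.mem_singleton] at hz ⊢
      rw [hz, restrictPerm_apply hA, if_neg hi]
    have := Hur.closed_lemma hclosed (Finset.mem_singleton_self i) h
    exact (Finset.mem_singleton.mp this).symm
  · rintro rfl; exact Equiv.Perm.SameCycle.refl _ _

theorem restrict_perm_def (x : GW m n) (A : Finset (Fin n)) :
    (GW.restrict x A).perm = GW.restrictPerm x.perm A := rfl

theorem restrict_wt_def (x : GW m n) (A : Finset (Fin n)) (i : Fin n) :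
    (GW.restrict x A).wt i = if i ∈ A then x.wt i else 0 := rfl

theorem cycWt_restrict {x : GW m n} {A C : Finset (Fin n)} (hC : C ⊆ A) :
    GW.cycWt (GW.restrict x A) C = GW.cycWt x C := by
  unfold GW.cycWt
  apply Finset.sum_congr rfl
  intro i hi
  rw [restrict_wt_def, if_pos (hC hi)]

/-- cycles of x lying inside A -/
noncomputable def cycIn (σ : Equiv.Perm (Fin n)) (A : Finset (Fin n)) : Finset (Finset (Fin n)) :=
  (Hur.clsSet σ.SameCycle).filter (· ⊆ A)

theorem cyclesIn_restrict {x : GW m n} {A : Finset (Fin n)} (hA : Inv x.perm A) :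
    GW.cyclesIn (GW.restrict x A) A = cycIn x.perm A := by
  ext C
  unfold GW.cyclesIn cycIn
  rw [cycles_eq_clsSet]
  simp only [Finset.mem_filter, restrict_perm_def]
  constructor
  · rintro ⟨hC, hCA⟩
    obtain ⟨i, rfl⟩ := Hur.mem_clsSet_iff.mp hC
    have hiA : i ∈ A := hCA (Hur.self_mem_cls (Hur.sameCycle_equivalence _) i)
    refine ⟨?_, hCA⟩
    have hcc : Hur.cls (GW.restrictPerm x.perm A).SameCycle i = Hur.cls x.perm.SameCycle i := by
      ext j
      rw [Hur.mem_cls, Hur.mem_cls, sameCycle_restrictPerm_iff hA hiA]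
    rw [hcc]
    exact Hur.cls_mem_clsSet _ _
  · rintro ⟨hC, hCA⟩
    obtain ⟨i, rfl⟩ := Hur.mem_clsSet_iff.mp hC
    have hiA : i ∈ A := hCA (Hur.self_mem_cls (Hur.sameCycle_equivalence _) i)
    constructor
    · rw [Hur.mem_clsSet_iff]
      refine ⟨i, ?_⟩
      ext j
      rw [Hur.mem_cls, Hur.mem_cls, sameCycle_restrictPerm_iff hA hiA]
    · exact hCA

theorem cls_subset_of_inv {σ : Equiv.Perm (Fin n)} {A : Finset (Fin n)} (hA : Inv σ A)
    {i : Fin n} (hi : i ∈ A) : Hur.cls σ.SameCycle i ⊆ A := by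
  intro j hj
  exact inv_mem_of_sameCycle hA hi (Hur.mem_cls.mp hj)

theorem cls_restrictPerm_mem {σ : Equiv.Perm (Fin n)} {A : Finset (Fin n)} (hA : Inv σ A)
    {i : Fin n} (hi : i ∈ A) :
    Hur.cls (GW.restrictPerm σ A).SameCycle i = Hur.cls σ.SameCycle i := by
  ext j
  rw [Hur.mem_cls, Hur.mem_cls, sameCycle_restrictPerm_iff hA hi]

theorem cls_restrictPerm_outside {σ : Equiv.Perm (Fin n)} {A : Finset (Fin n)} (hA : Inv σ A)
    {i : Fin n} (hi : i ∉ A) :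
    Hur.cls (GW.restrictPerm σ A).SameCycle i = {i} := by
  ext j
  rw [Hur.mem_cls, Finset.mem_singleton, sameCycle_restrictPerm_outside hA hi, eq_comm]

theorem clsSet_restrictPerm {σ : Equiv.Perm (Fin n)} {A : Finset (Fin n)} (hA : Inv σ A) :
    Hur.clsSet (GW.restrictPerm σ A).SameCycle =
      cycIn σ A ∪ (Finset.univ \ A).image ({·}) := by
  ext C
  simp only [Finset.mem_union, Hur.mem_clsSet_iff, Finset.mem_image, Finset.mem_sdiff,
    Finset.mem_univ, true_and]
  constructor
  · rintro ⟨i, rfl⟩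
    by_cases hi : i ∈ A
    · left
      rw [cls_restrictPerm_mem hA hi]
      exact Finset.mem_filter.mpr ⟨Hur.cls_mem_clsSet _ _, cls_subset_of_inv hA hi⟩
    · right
      exact ⟨i, hi, (cls_restrictPerm_outside hA hi).symm⟩
  · rintro (hC | ⟨i, hi, rfl⟩)
    · rw [cycIn, Finset.mem_filter] at hC
      obtain ⟨i, rfl⟩ := Hur.mem_clsSet_iff.mp hC.1
      have hi : i ∈ A := hC.2 (Hur.self_mem_cls (Hur.sameCycle_equivalence _) i)
      exact ⟨i, cls_restrictPerm_mem hA hi⟩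
    · exact ⟨i, cls_restrictPerm_outside hA hi⟩

theorem pc_restrictPerm {σ : Equiv.Perm (Fin n)} {A : Finset (Fin n)} (hA : Inv σ A) :
    Hur.pc (GW.restrictPerm σ A) + A.card = (cycIn σ A).card + n := by
  have hdisj : Disjoint (cycIn σ A) ((Finset.univ \ A).image ({·} : Fin n → Finset (Fin n))) := by
    rw [Finset.disjoint_left]
    rintro C hC hC'
    obtain ⟨i, hi, rfl⟩ := Finset.mem_image.mp hC'
    rw [Finset.mem_sdiff] at hi
    have := (Finset.mem_filter.mp hC).2
    exact hi.2 (this (Finset.mem_singleton_self i))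
  have hcard : ((Finset.univ \ A).image ({·} : Fin n → Finset (Fin n))).card = n - A.card := by
    rw [Finset.card_image_of_injective _ Finset.singleton_injective, Finset.card_sdiff_of_subset
      (Finset.subset_univ A), Finset.card_univ, Fintype.card_fin]
  have hAle : A.card ≤ n := by
    have := Finset.card_le_card (Finset.subset_univ A)
    rwa [Finset.card_univ, Fintype.card_fin] at this
  rw [Hur.pc, Hur.nc, clsSet_restrictPerm hA, Finset.card_union_of_disjoint hdisj, hcard]
  omega

theorem biUnion_cycIn {σ : Equiv.Perm (Fin n)} {A : Finset (Fin n)} (hA : Inv σ A) :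
    (cycIn σ A).biUnion id = A := by
  ext i
  simp only [Finset.mem_biUnion, id]
  constructor
  · rintro ⟨C, hC, hiC⟩
    exact (Finset.mem_filter.mp hC).2 hiC
  · intro hi
    exact ⟨Hur.cls σ.SameCycle i, Finset.mem_filter.mpr ⟨Hur.cls_mem_clsSet _ _,
      cls_subset_of_inv hA hi⟩, Hur.self_mem_cls (Hur.sameCycle_equivalence _) i⟩

theorem sum_cycIn_cycWt {x : GW m n} {A : Finset (Fin n)} (hA : Inv x.perm A) :
    ∑ C ∈ cycIn x.perm A, GW.cycWt x C = ∑ i ∈ A, x.wt i := by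
  have hdisj : ∀ C ∈ cycIn x.perm A, ∀ D ∈ cycIn x.perm A, C ≠ D → Disjoint C D := by
    intro C hC D hD hne
    exact Hur.clsSet_disjoint (Hur.sameCycle_equivalence _)
      (Finset.mem_filter.mp hC).1 (Finset.mem_filter.mp hD).1 hne
  have h : ∑ i ∈ (cycIn x.perm A).biUnion id, x.wt i =
      ∑ C ∈ cycIn x.perm A, ∑ i ∈ id C, x.wt i := Finset.sum_biUnion hdisj
  rw [biUnion_cycIn hA] at h
  unfold GW.cycWt
  simp only [id] at h
  exact h.symm

theorem wtTot_restrict (x : GW m n) (A : Finset (Fin n)) :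
    GW.wtTot (GW.restrict x A) = ∑ i ∈ A, x.wt i := by
  unfold GW.wtTot
  rw [← Finset.sum_filter_add_sum_filter_not Finset.univ (· ∈ A)]
  have h1 : ∑ i ∈ Finset.univ.filter (· ∈ A), (GW.restrict x A).wt i = ∑ i ∈ A, x.wt i := by
    rw [Finset.filter_mem_eq_inter, Finset.univ_inter]
    apply Finset.sum_congr rfl
    intro i hi
    rw [restrict_wt_def, if_pos hi]
  have h2 : ∑ i ∈ Finset.univ.filter (fun i => ¬ i ∈ A), (GW.restrict x A).wt i = 0 := by
    apply Finset.sum_eq_zero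
    intro i hi
    rw [restrict_wt_def, if_neg (Finset.mem_filter.mp hi).2]
  rw [h1, h2, add_zero]

theorem wtTot_mul (x y : GW m n) : GW.wtTot (x * y) = GW.wtTot x + GW.wtTot y := by
  unfold GW.wtTot
  simp only [GW.mul_wt]
  rw [Finset.sum_add_distrib]
  congr 1
  exact Fintype.sum_equiv x.perm⁻¹ (fun i => y.wt (x.perm⁻¹ i)) y.wt (fun i => rfl)

theorem restrict_mul {u w : GW m n} {A : Finset (Fin n)} (hu : Inv u.perm A) (hw : Inv w.perm A) :
    GW.restrict u A * GW.restrict (u⁻¹ * w) A = GW.restrict w A := by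
  have hv : Inv (u⁻¹ * w).perm A := by
    have : (u⁻¹ * w).perm = u.perm⁻¹ * w.perm := rfl
    rw [this]
    exact Inv.mul (Inv.inv hu) hw
  have hperm : ∀ (x : GW m n) (hx : Inv x.perm A) (i : Fin n),
      (GW.restrict x A).perm i = if i ∈ A then x.perm i else i := by
    intro x hx i
    rw [restrict_perm_def, restrictPerm_apply hx]
  refine GW.ext ?_ ?_
  · apply Equiv.ext
    intro i
    show (GW.restrict u A).perm ((GW.restrict (u⁻¹ * w) A).perm i) = (GW.restrict w A).perm i
    rw [hperm _ hv, hperm _ hu, hperm _ hw]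
    by_cases hi : i ∈ A
    · rw [if_pos hi]
      have hvi : (u⁻¹ * w).perm i ∈ A := (hv i).mpr hi
      rw [if_pos hi, if_pos hvi]
      show u.perm ((u.perm⁻¹ * w.perm) i) = w.perm i
      rw [Equiv.Perm.mul_apply, show u.perm (u.perm⁻¹ (w.perm i)) = w.perm i from Equiv.apply_symm_apply _ _]
    · rw [if_neg hi, if_neg hi, if_neg hi]
  · funext i
    show (GW.restrict u A).wt i + (GW.restrict (u⁻¹ * w) A).wt ((GW.restrict u A).perm⁻¹ i) =
      (GW.restrict w A).wt i
    rw [restrict_perm_def, restrictPerm_inv_apply hu]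
    by_cases hi : i ∈ A
    · rw [if_pos hi]
      have hui : u.perm⁻¹ i ∈ A := (Inv.inv hu i).mpr hi
      rw [restrict_wt_def, restrict_wt_def, restrict_wt_def, if_pos hi, if_pos hui, if_pos hi]
      have hww : u * (u⁻¹ * w) = w := by rw [← mul_assoc, mul_inv_cancel, one_mul]
      have := congrArg (fun z => GW.wt z i) hww
      simpa using this.symm
    · rw [if_neg hi]
      rw [restrict_wt_def, restrict_wt_def, restrict_wt_def, if_neg hi, if_neg hi, if_neg hi]
      simp

theorem piRel_equiv (u w : GW m n) : Equivalence (GW.piRel u w) :=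
  Relation.EqvGen.is_equivalence _

theorem cycleOf_mem_cycles (w : GW m n) (i : Fin n) : GW.cycleOf w i ∈ GW.cycles w :=
  Finset.mem_image_of_mem _ (Finset.mem_univ i)

theorem mem_piPart {u w : GW m n} {C C' : Finset (Fin n)} :
    C' ∈ GW.piPart u w C ↔ C' ∈ GW.cycles w ∧ GW.piRel u w C C' := by
  classical
  unfold GW.piPart
  rw [Finset.mem_filter]

theorem mem_piParts {u w : GW m n} {B : Finset (Finset (Fin n))} :
    B ∈ GW.piParts u w ↔ ∃ C ∈ GW.cycles w, GW.piPart u w C = B := by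
  unfold GW.piParts
  simp [Finset.mem_image]

theorem piPart_eq_of_rel {u w : GW m n} {C C' : Finset (Fin n)}
    (h : GW.piRel u w C C') : GW.piPart u w C = GW.piPart u w C' := by
  classical
  unfold GW.piPart
  apply Finset.filter_congr
  intro D _
  have hE := piRel_equiv u w
  exact ⟨fun hD => hE.trans (hE.symm h) hD, fun hD => hE.trans h hD⟩

theorem piPart_closure {u w : GW m n} {B : Finset (Finset (Fin n))} (hB : B ∈ GW.piParts u w)
    {C C' : Finset (Fin n)} (hC : C ∈ B) (hrel : GW.piRel u w C C') (hC' : C' ∈ GW.cycles w) :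
    C' ∈ B := by
  obtain ⟨C₀, hC₀, rfl⟩ := mem_piParts.mp hB
  rw [mem_piPart] at hC ⊢
  exact ⟨hC', (piRel_equiv u w).trans hC.2 hrel⟩

theorem mem_supp {B : Finset (Finset (Fin n))} {i : Fin n} :
    i ∈ GW.supp B ↔ ∃ C ∈ B, i ∈ C := by
  unfold GW.supp
  simp [Finset.mem_sup]

theorem mem_cycles_iff {w : GW m n} {C : Finset (Fin n)} :
    C ∈ GW.cycles w ↔ ∃ i, GW.cycleOf w i = C := by
  unfold GW.cycles
  simp [eq_comm]

theorem cycleOf_eq_of_mem {w : GW m n} {C : Finset (Fin n)} (hC : C ∈ GW.cycles w)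
    {i : Fin n} (hi : i ∈ C) : GW.cycleOf w i = C := by
  obtain ⟨j, rfl⟩ := mem_cycles_iff.mp hC
  rw [cycleOf_eq_cls] at hi
  rw [cycleOf_eq_cls w i, cycleOf_eq_cls w j]
  exact (Hur.cls_eq_of_rel (Hur.sameCycle_equivalence _) (Hur.mem_cls.mp hi)).symm

theorem self_mem_cycleOf (w : GW m n) (i : Fin n) : i ∈ GW.cycleOf w i := by
  rw [cycleOf_eq_cls]
  exact Hur.self_mem_cls (Hur.sameCycle_equivalence _) i

theorem mem_supp_iff_cycleOf {u w : GW m n} {B : Finset (Finset (Fin n))}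
    (hB : B ∈ GW.piParts u w) {i : Fin n} :
    i ∈ GW.supp B ↔ GW.cycleOf w i ∈ B := by
  rw [mem_supp]
  constructor
  · rintro ⟨C, hC, hiC⟩
    obtain ⟨C₀, hC₀, rfl⟩ := mem_piParts.mp hB
    have := cycleOf_eq_of_mem (mem_piPart.mp hC).1 hiC
    rwa [this]
  · intro h
    exact ⟨GW.cycleOf w i, h, self_mem_cycleOf w i⟩

theorem sameCycle_cycleOf_eq {w : GW m n} {i j : Fin n} (h : w.perm.SameCycle i j) :
    GW.cycleOf w i = GW.cycleOf w j := by
  rw [cycleOf_eq_cls, cycleOf_eq_cls]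
  exact Hur.cls_eq_of_rel (Hur.sameCycle_equivalence _) h

theorem piRelBase_cycleOf (u w : GW m n) (i : Fin n) :
    GW.piRelBase u w (GW.cycleOf w i) (GW.cycleOf w (u.perm i)) := by
  refine ⟨cycleOf_mem_cycles w i, cycleOf_mem_cycles w _, GW.cycleOf u i, cycleOf_mem_cycles u i,
    ⟨i, ?_⟩, ⟨u.perm i, ?_⟩⟩
  · rw [Finset.mem_inter]
    exact ⟨self_mem_cycleOf u i, self_mem_cycleOf w i⟩
  · rw [Finset.mem_inter]
    constructor
    · rw [cycleOf_eq_cls, Hur.mem_cls]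
      exact ⟨1, by simp⟩
    · exact self_mem_cycleOf w _

theorem supp_inv_w {u w : GW m n} {B : Finset (Finset (Fin n))} (hB : B ∈ GW.piParts u w) :
    Inv w.perm (GW.supp B) := by
  intro i
  have hsc : w.perm.SameCycle i (w.perm i) := ⟨1, by simp⟩
  rw [mem_supp_iff_cycleOf hB, mem_supp_iff_cycleOf hB, sameCycle_cycleOf_eq hsc.symm]

theorem supp_inv_u {u w : GW m n} {B : Finset (Finset (Fin n))} (hB : B ∈ GW.piParts u w) :
    Inv u.perm (GW.supp B) := by
  intro i
  rw [mem_supp_iff_cycleOf hB, mem_supp_iff_cycleOf hB]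
  constructor
  · intro h
    exact piPart_closure hB h
      ((piRel_equiv u w).symm (Relation.EqvGen.rel _ _ (piRelBase_cycleOf u w i)))
      (cycleOf_mem_cycles w i)
  · intro h
    exact piPart_closure hB h (Relation.EqvGen.rel _ _ (piRelBase_cycleOf u w i))
      (cycleOf_mem_cycles w _)

theorem supp_inv_v {u w : GW m n} {B : Finset (Finset (Fin n))} (hB : B ∈ GW.piParts u w) :
    Inv (u⁻¹ * w).perm (GW.supp B) := by
  have : (u⁻¹ * w).perm = u.perm⁻¹ * w.perm := rfl
  rw [this]
  exact Inv.mul (Inv.inv (supp_inv_u hB)) (supp_inv_w hB)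

theorem piParts_disjoint {u w : GW m n} {B₁ B₂ : Finset (Finset (Fin n))}
    (h₁ : B₁ ∈ GW.piParts u w) (h₂ : B₂ ∈ GW.piParts u w) (hne : B₁ ≠ B₂) :
    Disjoint B₁ B₂ := by
  obtain ⟨C₁, hC₁, rfl⟩ := mem_piParts.mp h₁
  obtain ⟨C₂, hC₂, rfl⟩ := mem_piParts.mp h₂
  rw [Finset.disjoint_left]
  intro C hC hC'
  rw [mem_piPart] at hC hC'
  exact hne (piPart_eq_of_rel ((piRel_equiv u w).trans hC.2 ((piRel_equiv u w).symm hC'.2)))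

theorem piParts_supp_disjoint {u w : GW m n} {B₁ B₂ : Finset (Finset (Fin n))}
    (h₁ : B₁ ∈ GW.piParts u w) (h₂ : B₂ ∈ GW.piParts u w) (hne : B₁ ≠ B₂) :
    Disjoint (GW.supp B₁) (GW.supp B₂) := by
  rw [Finset.disjoint_left]
  intro i hi₁ hi₂
  rw [mem_supp_iff_cycleOf h₁] at hi₁
  rw [mem_supp_iff_cycleOf h₂] at hi₂
  exact (Finset.disjoint_left.mp (piParts_disjoint h₁ h₂ hne)) hi₁ hi₂

theorem cycles_biUnion_piParts (u w : GW m n) :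
    (GW.piParts u w).biUnion id = GW.cycles w := by
  ext C
  simp only [Finset.mem_biUnion, id]
  constructor
  · rintro ⟨B, hB, hC⟩
    obtain ⟨C₀, _, rfl⟩ := mem_piParts.mp hB
    exact (mem_piPart.mp hC).1
  · intro hC
    exact ⟨GW.piPart u w C, mem_piParts.mpr ⟨C, hC, rfl⟩,
      mem_piPart.mpr ⟨hC, (piRel_equiv u w).refl C⟩⟩

theorem supp_biUnion_piParts (u w : GW m n) :
    (GW.piParts u w).biUnion GW.supp = Finset.univ := by
  ext i
  simp only [Finset.mem_biUnion, Finset.mem_univ, iff_true]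
  refine ⟨GW.piPart u w (GW.cycleOf w i), mem_piParts.mpr ⟨GW.cycleOf w i, cycleOf_mem_cycles w i, rfl⟩, ?_⟩
  rw [mem_supp]
  exact ⟨GW.cycleOf w i, mem_piPart.mpr ⟨cycleOf_mem_cycles w i, (piRel_equiv u w).refl _⟩,
    self_mem_cycleOf w i⟩

theorem part_eq_cycIn {u w : GW m n} {B : Finset (Finset (Fin n))} (hB : B ∈ GW.piParts u w) :
    B = cycIn w.perm (GW.supp B) := by
  ext C
  rw [cycIn, Finset.mem_filter, ← cycles_eq_clsSet]
  constructor
  · intro hC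
    refine ⟨?_, ?_⟩
    · obtain ⟨C₀, _, rfl⟩ := mem_piParts.mp hB
      exact (mem_piPart.mp hC).1
    · intro i hi
      rw [mem_supp]
      exact ⟨C, hC, hi⟩
  · rintro ⟨hC, hsub⟩
    obtain ⟨i, rfl⟩ := mem_cycles_iff.mp hC
    have hi : i ∈ GW.supp B := hsub (self_mem_cycleOf w i)
    exact (mem_supp_iff_cycleOf hB).mp hi

theorem subset_supp_of_mem {B : Finset (Finset (Fin n))} {C : Finset (Fin n)} (hC : C ∈ B) :
    C ⊆ GW.supp B :=
  Finset.le_sup (f := id) hC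

theorem sameCycle_of_mem_cycle {w : GW m n} {C : Finset (Fin n)} (hC : C ∈ GW.cycles w)
    {p q : Fin n} (hp : p ∈ C) (hq : q ∈ C) : w.perm.SameCycle p q := by
  have := cycleOf_eq_of_mem hC hp
  rw [← this, cycleOf_eq_cls, Hur.mem_cls] at hq
  exact hq

theorem inv_restrictPerm {σ : Equiv.Perm (Fin n)} {A : Finset (Fin n)} (hA : Inv σ A) :
    Inv (GW.restrictPerm σ A) A := by
  intro i
  rw [restrictPerm_apply hA]
  by_cases hi : i ∈ A
  · rw [if_pos hi]; simp [hi, hA i]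
  · rw [if_neg hi]

theorem cycle_nonempty {w : GW m n} {C : Finset (Fin n)} (hC : C ∈ GW.cycles w) : C.Nonempty := by
  obtain ⟨i, rfl⟩ := mem_cycles_iff.mp hC
  exact ⟨i, self_mem_cycleOf w i⟩

theorem nc_QQ_part {u w : GW m n} {B : Finset (Finset (Fin n))} (hB : B ∈ GW.piParts u w) :
    Hur.nc (Hur.QQ (GW.restrict u (GW.supp B)).perm (GW.restrict w (GW.supp B)).perm)
      + (GW.supp B).card = 1 + n := by
  classical
  set A := GW.supp B with hA
  have hwInv : Inv w.perm A := supp_inv_w hB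
  have huInv : Inv u.perm A := supp_inv_u hB
  set uA' := (GW.restrict u A).perm with huA'
  set wA' := (GW.restrict w A).perm with hwA'
  have huA'def : uA' = GW.restrictPerm u.perm A := rfl
  have hwA'def : wA' = GW.restrictPerm w.perm A := rfl
  set Q := Hur.QQ uA' wA' with hQ
  have hQeq : Equivalence Q := Hur.QQ_equiv _ _
  set Rfull : Fin n → Fin n → Prop := fun i j => (i ∈ A ∧ j ∈ A) ∨ i = j with hRfull
  have hReq : Equivalence Rfull := by
    constructor
    · intro x; exact Or.inr rfl
    · rintro x y (⟨h1, h2⟩ | rfl)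
      · exact Or.inl ⟨h2, h1⟩
      · exact Or.inr rfl
    · rintro x y z (⟨h1, h2⟩ | rfl) (⟨h3, h4⟩ | rfl)
      · exact Or.inl ⟨h1, h4⟩
      · exact Or.inl ⟨h1, h2⟩
      · exact Or.inl ⟨h3, h4⟩
      · exact Or.inr rfl
  -- Q ≤ Rfull
  have hQR : ∀ i j, Q i j → Rfull i j := by
    intro i j hij
    refine Hur.eqvGen_le hReq ?_ i j hij
    rintro x y (hxy | hxy)
    · by_cases hx : x ∈ A
      · exact Or.inl ⟨hx, inv_mem_of_sameCycle (inv_restrictPerm huInv) hx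
          (by rw [huA'def] at hxy; exact hxy)⟩
      · rw [huA'def, sameCycle_restrictPerm_outside huInv hx] at hxy
        exact Or.inr hxy
    · by_cases hx : x ∈ A
      · exact Or.inl ⟨hx, inv_mem_of_sameCycle (inv_restrictPerm hwInv) hx
          (by rw [hwA'def] at hxy; exact hxy)⟩
      · rw [hwA'def, sameCycle_restrictPerm_outside hwInv hx] at hxy
        exact Or.inr hxy
  -- within-A connectivity
  have hQw : ∀ {C : Finset (Fin n)}, C ∈ GW.cycles w → C ⊆ A → ∀ p ∈ C, ∀ q ∈ C, Q p q := by
    intro C hC hsub p hp q hq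
    have := sameCycle_of_mem_cycle hC hp hq
    have hsc : wA'.SameCycle p q := by
      rw [hwA'def]
      exact (sameCycle_restrictPerm_iff hwInv (hsub hp)).mpr this
    exact Relation.EqvGen.rel _ _ (Or.inr hsc)
  have hQu : ∀ {D : Finset (Fin n)}, D ∈ GW.cycles u → D ⊆ A → ∀ p ∈ D, ∀ q ∈ D, Q p q := by
    intro D hD hsub p hp q hq
    have hscu : u.perm.SameCycle p q := by
      obtain ⟨i, rfl⟩ := mem_cycles_iff.mp hD
      rw [cycleOf_eq_cls, Hur.mem_cls] at hp hq
      exact ((Hur.sameCycle_equivalence u.perm).symm hp).trans hq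
    have hsc : uA'.SameCycle p q := by
      rw [huA'def]
      exact (sameCycle_restrictPerm_iff huInv (hsub hp)).mpr hscu
    exact Relation.EqvGen.rel _ _ (Or.inl hsc)
  have hclaim : ∀ C C' : Finset (Fin n), GW.piRel u w C C' →
      (C ∈ B ↔ C' ∈ B) ∧ (C ∈ B → ∀ p ∈ C, ∀ q ∈ C', Q p q) := by
    intro C C' h
    have h' : Relation.EqvGen (GW.piRelBase u w) C C' := h
    clear h
    induction h' with
    | rel C C' hbase =>
        obtain ⟨hCw, hC'w, D, hD, ⟨x, hx⟩, ⟨y, hy⟩⟩ := hbase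
        rw [Finset.mem_inter] at hx hy
        constructor
        · constructor
          · intro hCB
            exact piPart_closure hB hCB (Relation.EqvGen.rel _ _ ⟨hCw, hC'w, D, hD, ⟨x, Finset.mem_inter.mpr hx⟩, ⟨y, Finset.mem_inter.mpr hy⟩⟩) hC'w
          · intro hC'B
            exact piPart_closure hB hC'B ((piRel_equiv u w).symm (Relation.EqvGen.rel _ _ ⟨hCw, hC'w, D, hD, ⟨x, Finset.mem_inter.mpr hx⟩, ⟨y, Finset.mem_inter.mpr hy⟩⟩)) hCw
        · intro hCB p hp q hq
          have hC'B : C' ∈ B := piPart_closure hB hCB (Relation.EqvGen.rel _ _ ⟨hCw, hC'w, D, hD, ⟨x, Finset.mem_inter.mpr hx⟩, ⟨y, Finset.mem_inter.mpr hy⟩⟩) hC'w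
          have hCsub : C ⊆ A := subset_supp_of_mem hCB
          have hC'sub : C' ⊆ A := subset_supp_of_mem hC'B
          have hDsub : D ⊆ A := by
            intro z hz
            have hxA : x ∈ A := hCsub hx.2
            exact inv_mem_of_sameCycle huInv hxA (sameCycle_of_mem_cycle hD hx.1 hz)
          exact hQeq.trans (hQw hCw hCsub p hp x hx.2)
            (hQeq.trans (hQu hD hDsub x hx.1 y hy.1) (hQw hC'w hC'sub y hy.2 q hq))
    | refl C =>
        refine ⟨Iff.rfl, ?_⟩
        intro hCB p hp q hq
        exact hQw (by
          obtain ⟨C₀, _, rfl⟩ := mem_piParts.mp hB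
          exact (mem_piPart.mp hCB).1) (subset_supp_of_mem hCB) p hp q hq
    | symm C C' _ ih =>
        refine ⟨ih.1.symm, ?_⟩
        intro hC'B p hp q hq
        exact hQeq.symm (ih.2 (ih.1.mpr hC'B) q hq p hp)
    | trans C C' C'' _ _ ih1 ih2 =>
        refine ⟨ih1.1.trans ih2.1, ?_⟩
        intro hCB p hp q hq
        have hC'B : C' ∈ B := ih1.1.mp hCB
        have hC'w : C' ∈ GW.cycles w := by
          obtain ⟨C₀, _, rfl⟩ := mem_piParts.mp hB
          exact (mem_piPart.mp hC'B).1
        obtain ⟨z, hz⟩ := cycle_nonempty hC'w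
        exact hQeq.trans (ih1.2 hCB p hp z hz) (ih2.2 hC'B z hz q hq)
  -- Rfull ≤ Q
  have hRQ : ∀ i j, Rfull i j → Q i j := by
    rintro i j (⟨hi, hj⟩ | rfl)
    · have hiB : GW.cycleOf w i ∈ B := (mem_supp_iff_cycleOf hB).mp hi
      have hjB : GW.cycleOf w j ∈ B := (mem_supp_iff_cycleOf hB).mp hj
      obtain ⟨C₀, hC₀, rfl⟩ := mem_piParts.mp hB
      have hrel : GW.piRel u w (GW.cycleOf w i) (GW.cycleOf w j) :=
        (piRel_equiv u w).trans ((piRel_equiv u w).symm (mem_piPart.mp hiB).2)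
          (mem_piPart.mp hjB).2
      exact (hclaim _ _ hrel).2 hiB i (self_mem_cycleOf w i) j (self_mem_cycleOf w j)
    · exact hQeq.refl i
  have hiff : ∀ i j, Q i j ↔ Rfull i j := fun i j => ⟨hQR i j, hRQ i j⟩
  rw [show Hur.nc (Hur.QQ uA' wA') = Hur.nc Rfull from Hur.nc_congr hiff]
  -- compute nc Rfull
  obtain ⟨C₀, hC₀w, rfl⟩ := mem_piParts.mp hB
  obtain ⟨i₀, hi₀⟩ := cycle_nonempty hC₀w
  have hi₀A : i₀ ∈ A := by
    rw [hA]
    exact subset_supp_of_mem (mem_piPart.mpr ⟨hC₀w, (piRel_equiv u w).refl _⟩) hi₀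
  have hclsR : ∀ i, Hur.cls Rfull i = if i ∈ A then A else {i} := by
    intro i
    by_cases hi : i ∈ A
    · rw [if_pos hi]
      ext j
      rw [Hur.mem_cls]
      constructor
      · rintro (⟨_, hj⟩ | rfl)
        · exact hj
        · exact hi
      · intro hj; exact Or.inl ⟨hi, hj⟩
    · rw [if_neg hi]
      ext j
      rw [Hur.mem_cls, Finset.mem_singleton]
      constructor
      · rintro (⟨hc, _⟩ | rfl)
        · exact absurd hc hi
        · rfl
      · rintro rfl; exact Or.inr rfl
  have hset : Hur.clsSet Rfull = insert A ((Finset.univ \ A).image ({·})) := by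
    ext C
    simp only [Hur.mem_clsSet_iff, Finset.mem_insert, Finset.mem_image, Finset.mem_sdiff,
      Finset.mem_univ, true_and]
    constructor
    · rintro ⟨i, rfl⟩
      rw [hclsR i]
      by_cases hi : i ∈ A
      · rw [if_pos hi]; exact Or.inl rfl
      · rw [if_neg hi]; exact Or.inr ⟨i, hi, rfl⟩
    · rintro (rfl | ⟨i, hi, rfl⟩)
      · exact ⟨i₀, by rw [hclsR i₀, if_pos hi₀A]⟩
      · exact ⟨i, by rw [hclsR i, if_neg hi]⟩
  have hAnot : A ∉ (Finset.univ \ A).image ({·} : Fin n → Finset (Fin n)) := by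
    intro hc
    obtain ⟨i, hi, hieq⟩ := Finset.mem_image.mp hc
    rw [Finset.mem_sdiff] at hi
    rw [← hieq] at hi₀A
    rw [Finset.mem_singleton] at hi₀A
    rw [hi₀A] at hi₀A
    exact hi.2 (by rw [← hieq]; exact Finset.mem_singleton_self i)
  have hAcard : A.card ≤ n := by
    have := Finset.card_le_card (Finset.subset_univ A)
    rwa [Finset.card_univ, Fintype.card_fin] at this
  rw [Hur.nc, hset, Finset.card_insert_of_notMem hAnot,
    Finset.card_image_of_injective _ Finset.singleton_injective,
    Finset.card_sdiff_of_subset (Finset.subset_univ A), Finset.card_univ, Fintype.card_fin]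
  omega

open Classical in
/-- zero-weight cycle count inside A -/
noncomputable def zcount (x : GW m n) (A : Finset (Fin n)) : ℕ :=
  ((cycIn x.perm A).filter fun C => GW.cycWt x C = 0).card

theorem zcount_le (x : GW m n) (A : Finset (Fin n)) : zcount x A ≤ (cycIn x.perm A).card :=
  Finset.card_filter_le _ _

theorem partWt_eq_wtTot {u w : GW m n} {B : Finset (Finset (Fin n))} (hB : B ∈ GW.piParts u w) :
    GW.partWt w B = GW.wtTot (GW.restrict w (GW.supp B)) := by
  rw [GW.partWt, wtTot_restrict]
  conv_lhs => rw [part_eq_cycIn hB]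
  exact sum_cycIn_cycWt (supp_inv_w hB)

theorem wtTot_restrict_eq_sum {x : GW m n} {A : Finset (Fin n)} (hA : Inv x.perm A) :
    GW.wtTot (GW.restrict x A) = ∑ C ∈ cycIn x.perm A, GW.cycWt x C := by
  rw [wtTot_restrict, sum_cycIn_cycWt hA]

theorem zcount_full {x : GW m n} {A : Finset (Fin n)}
    (h : zcount x A = (cycIn x.perm A).card) :
    ∀ C ∈ cycIn x.perm A, GW.cycWt x C = 0 := by
  classical
  intro C hC
  exact Finset.filter_card_eq (by rw [← h]; congr 1) C hC

theorem wtTot_restrict_zero {x : GW m n} {A : Finset (Fin n)} (hA : Inv x.perm A)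
    (h : ∀ C ∈ cycIn x.perm A, GW.cycWt x C = 0) : GW.wtTot (GW.restrict x A) = 0 := by
  rw [wtTot_restrict_eq_sum hA]
  exact Finset.sum_eq_zero h

theorem part_hurwitz {u w : GW m n} {B : Finset (Finset (Fin n))} (hB : B ∈ GW.piParts u w) :
    (cycIn u.perm (GW.supp B)).card + (cycIn (u⁻¹ * w).perm (GW.supp B)).card
      + (cycIn w.perm (GW.supp B)).card ≤ (GW.supp B).card + 2 := by
  set A := GW.supp B with hA
  set x := (GW.restrict u A).perm with hx
  set y := (GW.restrict (u⁻¹ * w) A).perm with hy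
  have hxy : x * y = (GW.restrict w A).perm := by
    rw [hx, hy, ← GW.mul_perm, restrict_mul (supp_inv_u hB) (supp_inv_w hB)]
  have hH := Hur.hurwitz x y
  have hQ : Hur.nc (Hur.QQ x (x * y)) + A.card = 1 + n := by
    rw [hxy]
    exact nc_QQ_part hB
  have hpu : Hur.pc x + A.card = (cycIn u.perm A).card + n :=
    pc_restrictPerm (supp_inv_u hB)
  have hpv : Hur.pc y + A.card = (cycIn (u⁻¹ * w).perm A).card + n :=
    pc_restrictPerm (supp_inv_v hB)
  have hpw : Hur.pc (x * y) + A.card = (cycIn w.perm A).card + n := by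
    rw [hxy]
    exact pc_restrictPerm (supp_inv_w hB)
  rw [Fintype.card_fin] at hH
  have hcu := Hur.pc_le x
  have hcv := Hur.pc_le y
  rw [Fintype.card_fin] at hcu hcv
  have hAcard : A.card ≤ n := by
    have := Finset.card_le_card (Finset.subset_univ A)
    rwa [Finset.card_univ, Fintype.card_fin] at this
  omega

theorem part_eps {u w : GW m n} {B : Finset (Finset (Fin n))} (hB : B ∈ GW.piParts u w)
    (hwt : GW.partWt w B ≠ 0) :
    zcount u (GW.supp B) + zcount (u⁻¹ * w) (GW.supp B) + 1 ≤
      (cycIn u.perm (GW.supp B)).card + (cycIn (u⁻¹ * w).perm (GW.supp B)).card := by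
  by_contra hc
  push_neg at hc
  have h1 := zcount_le u (GW.supp B)
  have h2 := zcount_le (u⁻¹ * w) (GW.supp B)
  have hzu : zcount u (GW.supp B) = (cycIn u.perm (GW.supp B)).card := by omega
  have hzv : zcount (u⁻¹ * w) (GW.supp B) = (cycIn (u⁻¹ * w).perm (GW.supp B)).card := by omega
  have hu0 : GW.wtTot (GW.restrict u (GW.supp B)) = 0 :=
    wtTot_restrict_zero (supp_inv_u hB) (zcount_full hzu)
  have hv0 : GW.wtTot (GW.restrict (u⁻¹ * w) (GW.supp B)) = 0 :=
    wtTot_restrict_zero (supp_inv_v hB) (zcount_full hzv)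
  have hw0 : GW.wtTot (GW.restrict w (GW.supp B)) = 0 := by
    rw [← restrict_mul (supp_inv_u hB) (supp_inv_w hB), wtTot_mul, hu0, hv0, add_zero]
  exact hwt (by rw [partWt_eq_wtTot hB, hw0])

theorem cycles_decomp {u w x : GW m n}
    (hinv : ∀ B ∈ GW.piParts u w, Inv x.perm (GW.supp B)) :
    GW.cycles x = (GW.piParts u w).biUnion (fun B => cycIn x.perm (GW.supp B)) := by
  ext C
  simp only [Finset.mem_biUnion]
  constructor
  · intro hC
    obtain ⟨i, rfl⟩ := mem_cycles_iff.mp hC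
    set B := GW.piPart u w (GW.cycleOf w i) with hBdef
    have hBmem : B ∈ GW.piParts u w := mem_piParts.mpr ⟨GW.cycleOf w i, cycleOf_mem_cycles w i, rfl⟩
    refine ⟨B, hBmem, ?_⟩
    rw [cycIn, Finset.mem_filter, ← cycles_eq_clsSet]
    refine ⟨cycleOf_mem_cycles x i, ?_⟩
    have hiB : i ∈ GW.supp B := by
      rw [mem_supp_iff_cycleOf hBmem]
      exact mem_piPart.mpr ⟨cycleOf_mem_cycles w i, (piRel_equiv u w).refl _⟩
    intro j hj
    rw [cycleOf_eq_cls, Hur.mem_cls] at hj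
    exact inv_mem_of_sameCycle (hinv B hBmem) hiB hj
  · rintro ⟨B, hB, hC⟩
    rw [cycIn, Finset.mem_filter, ← cycles_eq_clsSet] at hC
    exact hC.1

theorem cycIn_pairwise_disjoint {u w x : GW m n} {B₁ B₂ : Finset (Finset (Fin n))}
    (h₁ : B₁ ∈ GW.piParts u w) (h₂ : B₂ ∈ GW.piParts u w) (hne : B₁ ≠ B₂) :
    Disjoint (cycIn x.perm (GW.supp B₁)) (cycIn x.perm (GW.supp B₂)) := by
  rw [Finset.disjoint_left]
  intro C hC₁ hC₂
  rw [cycIn, Finset.mem_filter] at hC₁ hC₂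
  obtain ⟨i, rfl⟩ := Hur.mem_clsSet_iff.mp hC₁.1
  have hi := Hur.self_mem_cls (Hur.sameCycle_equivalence x.perm) i
  exact Finset.disjoint_left.mp (piParts_supp_disjoint h₁ h₂ hne) (hC₁.2 hi) (hC₂.2 hi)

theorem c0_decomp {u w x : GW m n}
    (hinv : ∀ B ∈ GW.piParts u w, Inv x.perm (GW.supp B)) :
    GW.c0 x = ∑ B ∈ GW.piParts u w, zcount x (GW.supp B) := by
  classical
  unfold GW.c0
  rw [cycles_decomp hinv, Finset.filter_biUnion, Finset.card_biUnion]
  · unfold zcount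
    apply Finset.sum_congr rfl
    intro B _
    congr 1
  · intro B₁ h₁ B₂ h₂ hne
    exact Finset.disjoint_filter_filter (cycIn_pairwise_disjoint h₁ h₂ hne)

theorem numCycles_decomp {u w x : GW m n}
    (hinv : ∀ B ∈ GW.piParts u w, Inv x.perm (GW.supp B)) :
    GW.numCycles x = ∑ B ∈ GW.piParts u w, (cycIn x.perm (GW.supp B)).card := by
  unfold GW.numCycles
  rw [cycles_decomp hinv, Finset.card_biUnion]
  intro B₁ h₁ B₂ h₂ hne
  exact cycIn_pairwise_disjoint h₁ h₂ hne

theorem sum_supp_card (u w : GW m n) :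
    ∑ B ∈ GW.piParts u w, (GW.supp B).card = n := by
  rw [← Finset.card_biUnion, supp_biUnion_piParts, Finset.card_univ, Fintype.card_fin]
  intro B₁ h₁ B₂ h₂ hne
  exact piParts_supp_disjoint h₁ h₂ hne

theorem numCycles_w_decomp (u w : GW m n) :
    GW.numCycles w = ∑ B ∈ GW.piParts u w, (cycIn w.perm (GW.supp B)).card := by
  unfold GW.numCycles
  have : GW.cycles w = (GW.piParts u w).biUnion id := (cycles_biUnion_piParts u w).symm
  rw [this, Finset.card_biUnion]
  · apply Finset.sum_congr rfl
    intro B hB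
    rw [← part_eq_cycIn hB]
    rfl
  · intro B₁ h₁ B₂ h₂ hne
    exact piParts_disjoint h₁ h₂ hne

theorem c0_le_n (x : GW m n) : GW.c0 x ≤ n := by
  have h1 : GW.c0 x ≤ GW.numCycles x := Finset.card_filter_le _ _
  have h2 : GW.numCycles x ≤ n := by
    rw [numCycles_eq_pc]
    have := Hur.pc_le x.perm
    rwa [Fintype.card_fin] at this
  omega

theorem codimfix_int (x : GW m n) : (GW.codimfix x : ℤ) = n - GW.c0 x := by
  unfold GW.codimfix
  have := c0_le_n x
  omega

theorem piPartsNonzeroWt_eq (u w : GW m n) :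
    GW.piPartsNonzeroWt u w = ∑ B ∈ GW.piParts u w, if GW.partWt w B ≠ 0 then 1 else 0 := by
  classical
  unfold GW.piPartsNonzeroWt
  rw [Finset.card_filter]

theorem allCyclesZero_iff {x : GW m n} {A : Finset (Fin n)} (hA : Inv x.perm A) :
    GW.allCyclesZero x A ↔ ∀ C ∈ cycIn x.perm A, GW.cycWt x C = 0 := by
  unfold GW.allCyclesZero
  rw [cyclesIn_restrict hA]
  constructor
  · intro h C hC
    have hsub : C ⊆ A := (Finset.mem_filter.mp hC).2
    rw [← cycWt_restrict hsub]
    exact h C hC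
  · intro h C hC
    have hsub : C ⊆ A := (Finset.mem_filter.mp hC).2
    rw [cycWt_restrict hsub]
    exact h C hC

theorem allCyclesZero_wtTot {x : GW m n} {A : Finset (Fin n)} (hA : Inv x.perm A)
    (h : GW.allCyclesZero x A) : GW.wtTot (GW.restrict x A) = 0 :=
  wtTot_restrict_zero hA ((allCyclesZero_iff hA).mp h)

open Classical in
theorem zcount_add_nonzero (x : GW m n) (A : Finset (Fin n)) :
    zcount x A + ((cycIn x.perm A).filter fun C => ¬ GW.cycWt x C = 0).card
      = (cycIn x.perm A).card := by
  unfold zcount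
  exact Finset.card_filter_add_card_filter_not _

theorem oneCycle_of_count {x : GW m n} {A : Finset (Fin n)} (hA : Inv x.perm A)
    (h : ((cycIn x.perm A).filter fun C => ¬ GW.cycWt x C = 0).card = 1) :
    GW.oneCycleOfWt x A (GW.wtTot (GW.restrict x A)) := by
  classical
  obtain ⟨C₀, hC₀⟩ := Finset.card_eq_one.mp h
  have hC₀mem : C₀ ∈ (cycIn x.perm A).filter fun C => ¬ GW.cycWt x C = 0 := by
    rw [hC₀]; exact Finset.mem_singleton_self C₀
  rw [Finset.mem_filter] at hC₀mem
  have hzero : ∀ C ∈ cycIn x.perm A, C ≠ C₀ → GW.cycWt x C = 0 := by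
    intro C hC hne
    by_contra hc
    have : C ∈ (cycIn x.perm A).filter fun C => ¬ GW.cycWt x C = 0 :=
      Finset.mem_filter.mpr ⟨hC, hc⟩
    rw [hC₀, Finset.mem_singleton] at this
    exact hne this
  have hwt : GW.wtTot (GW.restrict x A) = GW.cycWt x C₀ := by
    rw [wtTot_restrict_eq_sum hA]
    exact Finset.sum_eq_single_of_mem C₀ hC₀mem.1 (fun C hC hne => hzero C hC hne)
  unfold GW.oneCycleOfWt
  rw [cyclesIn_restrict hA]
  refine ⟨C₀, hC₀mem.1, ?_, ?_⟩
  · rw [cycWt_restrict (Finset.mem_filter.mp hC₀mem.1).2, hwt]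
  · intro C hC hne
    rw [cycWt_restrict (Finset.mem_filter.mp hC).2]
    exact hzero C hC hne

theorem allCyclesZero_of_count {x : GW m n} {A : Finset (Fin n)} (hA : Inv x.perm A)
    (h : zcount x A = (cycIn x.perm A).card) : GW.allCyclesZero x A :=
  (allCyclesZero_iff hA).mpr (zcount_full h)

-- MARKER
end GW

/-- Let `u, w ∈ G(m,p,n)` with
`codimfix(u) + codimfix(u⁻¹w) = n + c(w) − 2|Π_u(w)| + #{parts of Π_u(w) of nonzero weight}`.
Then for each part `B` of `Π_u(w)` (with support `A = Supp(B)`):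
`c(u|_B) + c(u⁻¹w|_B) = #Supp(B) − c(w|_B) + 2`, and exactly one of the cases
(i), (ii), (iii) holds. -/
theorem stmt8 (m p n : ℕ) (hm : 0 < m) (hp : 0 < p) (hn : 0 < n) (hpm : p ∣ m)
    (u w : GW m n) (hu : GW.Gmem p hpm u) (hw : GW.Gmem p hpm w)
    (heq : (GW.codimfix u : ℤ) + (GW.codimfix (u⁻¹ * w) : ℤ) =
      (n : ℤ) + (GW.numCycles w : ℤ) - 2 * ((GW.piParts u w).card : ℤ) +
        (GW.piPartsNonzeroWt u w : ℤ)) :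
    ∀ B ∈ GW.piParts u w,
      (((GW.cyclesIn (GW.restrict u (GW.supp B)) (GW.supp B)).card : ℤ) +
          ((GW.cyclesIn (GW.restrict (u⁻¹ * w) (GW.supp B)) (GW.supp B)).card : ℤ) =
        ((GW.supp B).card : ℤ) -
          ((GW.cyclesIn (GW.restrict w (GW.supp B)) (GW.supp B)).card : ℤ) + 2) ∧
      ((GW.condI u w (GW.supp B) ∧ ¬ GW.condII u w (GW.supp B) ∧
          ¬ GW.condIII u w (GW.supp B)) ∨
       (¬ GW.condI u w (GW.supp B) ∧ GW.condII u w (GW.supp B) ∧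
          ¬ GW.condIII u w (GW.supp B)) ∨
       (¬ GW.condI u w (GW.supp B) ∧ ¬ GW.condII u w (GW.supp B) ∧
          GW.condIII u w (GW.supp B))) := by
  classical
  have hinvU : ∀ B ∈ GW.piParts u w, GW.Inv u.perm (GW.supp B) := fun B hB => GW.supp_inv_u hB
  have hinvV : ∀ B ∈ GW.piParts u w, GW.Inv (u⁻¹ * w).perm (GW.supp B) :=
    fun B hB => GW.supp_inv_v hB
  set P := GW.piParts u w with hP
  set f : Finset (Finset (Fin n)) → ℤ := fun B =>
    2 * ((GW.supp B).card : ℤ) - (GW.zcount u (GW.supp B) : ℤ) -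
      (GW.zcount (u⁻¹ * w) (GW.supp B) : ℤ) with hf
  set g : Finset (Finset (Fin n)) → ℤ := fun B =>
    (((GW.supp B).card : ℤ) + ((GW.cycIn w.perm (GW.supp B)).card : ℤ) - 2) +
      (if GW.partWt w B ≠ 0 then 1 else 0) with hg
  have hge : ∀ B ∈ P, g B ≤ f B := by
    intro B hB
    have h1 := GW.zcount_le u (GW.supp B)
    have h2 := GW.zcount_le (u⁻¹ * w) (GW.supp B)
    have h3 := GW.part_hurwitz hB
    by_cases hwt : GW.partWt w B ≠ 0
    · have h4 := GW.part_eps hB hwt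
      simp only [hf, hg, if_pos hwt]
      push_cast
      omega
    · simp only [hf, hg, if_neg hwt]
      push_cast
      omega
  have hsumf : ∑ B ∈ P, f B = (GW.codimfix u : ℤ) + (GW.codimfix (u⁻¹ * w) : ℤ) := by
    simp only [hf]
    rw [Finset.sum_sub_distrib, Finset.sum_sub_distrib, ← Finset.mul_sum]
    have e1 : ∑ B ∈ P, ((GW.supp B).card : ℤ) = (n : ℤ) := by
      exact_mod_cast GW.sum_supp_card u w
    have e2 : ∑ B ∈ P, (GW.zcount u (GW.supp B) : ℤ) = (GW.c0 u : ℤ) := by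
      exact_mod_cast (GW.c0_decomp hinvU).symm
    have e3 : ∑ B ∈ P, (GW.zcount (u⁻¹ * w) (GW.supp B) : ℤ) = (GW.c0 (u⁻¹ * w) : ℤ) := by
      exact_mod_cast (GW.c0_decomp hinvV).symm
    rw [e1, e2, e3, GW.codimfix_int, GW.codimfix_int]
    ring
  have hsumg : ∑ B ∈ P, g B = (n : ℤ) + (GW.numCycles w : ℤ) - 2 * (P.card : ℤ) +
      (GW.piPartsNonzeroWt u w : ℤ) := by
    simp only [hg]
    rw [Finset.sum_add_distrib, Finset.sum_sub_distrib, Finset.sum_add_distrib]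
    have e1 : ∑ B ∈ P, ((GW.supp B).card : ℤ) = (n : ℤ) := by
      exact_mod_cast GW.sum_supp_card u w
    have e2 : ∑ B ∈ P, ((GW.cycIn w.perm (GW.supp B)).card : ℤ) = (GW.numCycles w : ℤ) := by
      exact_mod_cast (GW.numCycles_w_decomp u w).symm
    have e3 : ∑ _B ∈ P, (2 : ℤ) = 2 * (P.card : ℤ) := by
      rw [Finset.sum_const, nsmul_eq_mul]
      ring
    have e4 : ∑ B ∈ P, (if GW.partWt w B ≠ 0 then (1 : ℤ) else 0) =
        (GW.piPartsNonzeroWt u w : ℤ) := by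
      rw [GW.piPartsNonzeroWt_eq]
      push_cast
      rfl
    rw [e1, e2, e3, e4]
  have hsum : ∑ B ∈ P, g B = ∑ B ∈ P, f B := by
    rw [hsumf, hsumg, heq]
  have hpt := (Finset.sum_eq_sum_iff_of_le hge).mp hsum
  intro B hB
  have hgf := hpt B hB
  simp only [hf, hg] at hgf
  have hicU : GW.cyclesIn (GW.restrict u (GW.supp B)) (GW.supp B) = GW.cycIn u.perm (GW.supp B) :=
    GW.cyclesIn_restrict (GW.supp_inv_u hB)
  have hicV : GW.cyclesIn (GW.restrict (u⁻¹ * w) (GW.supp B)) (GW.supp B) =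
      GW.cycIn (u⁻¹ * w).perm (GW.supp B) := GW.cyclesIn_restrict (GW.supp_inv_v hB)
  have hicW : GW.cyclesIn (GW.restrict w (GW.supp B)) (GW.supp B) = GW.cycIn w.perm (GW.supp B) :=
    GW.cyclesIn_restrict (GW.supp_inv_w hB)
  have h1 := GW.zcount_le u (GW.supp B)
  have h2 := GW.zcount_le (u⁻¹ * w) (GW.supp B)
  have h3 := GW.part_hurwitz hB
  have hwtTot : GW.partWt w B = GW.wtTot (GW.restrict w (GW.supp B)) := GW.partWt_eq_wtTot hB
  constructor
  · -- the count equality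
    rw [hicU, hicV, hicW]
    by_cases hwt : GW.partWt w B ≠ 0
    · have h4 := GW.part_eps hB hwt
      rw [if_pos hwt] at hgf
      omega
    · rw [if_neg hwt] at hgf
      omega
  · by_cases hwt : GW.partWt w B = 0
    · -- case (i)
      rw [if_neg (by simpa using hwt)] at hgf
      have hzu : GW.zcount u (GW.supp B) = (GW.cycIn u.perm (GW.supp B)).card := by omega
      have hzv : GW.zcount (u⁻¹ * w) (GW.supp B) =
          (GW.cycIn (u⁻¹ * w).perm (GW.supp B)).card := by omega
      have hw0 : GW.wtTot (GW.restrict w (GW.supp B)) = 0 := by rw [← hwtTot]; exact hwt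
      refine Or.inl ⟨⟨hw0, GW.allCyclesZero_of_count (GW.supp_inv_u hB) hzu,
        GW.allCyclesZero_of_count (GW.supp_inv_v hB) hzv⟩, ?_, ?_⟩
      · rintro ⟨_, hne, _, _⟩
        exact hne hw0
      · rintro ⟨_, hne, _, _⟩
        exact hne hw0
    · -- cases (ii)/(iii)
      rw [if_pos (by simpa using hwt)] at hgf
      have h4 := GW.part_eps hB hwt
      have hne0 : GW.wtTot (GW.restrict w (GW.supp B)) ≠ 0 := by rw [← hwtTot]; exact hwt
      have hw_split : GW.wtTot (GW.restrict w (GW.supp B)) =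
          GW.wtTot (GW.restrict u (GW.supp B)) +
            GW.wtTot (GW.restrict (u⁻¹ * w) (GW.supp B)) := by
        rw [← GW.restrict_mul (GW.supp_inv_u hB) (GW.supp_inv_w hB), GW.wtTot_mul]
      by_cases hcase : GW.zcount u (GW.supp B) = (GW.cycIn u.perm (GW.supp B)).card
      · -- all u-cycles zero: case (iii)
        have hzv1 : GW.zcount (u⁻¹ * w) (GW.supp B) + 1 =
            (GW.cycIn (u⁻¹ * w).perm (GW.supp B)).card := by omega
        have aczU : GW.allCyclesZero u (GW.supp B) :=
          GW.allCyclesZero_of_count (GW.supp_inv_u hB) hcase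
        have hu0 : GW.wtTot (GW.restrict u (GW.supp B)) = 0 :=
          GW.allCyclesZero_wtTot (GW.supp_inv_u hB) aczU
        have hvw : GW.wtTot (GW.restrict (u⁻¹ * w) (GW.supp B)) =
            GW.wtTot (GW.restrict w (GW.supp B)) := by rw [hw_split, hu0, zero_add]
        have hcount1 : ((GW.cycIn (u⁻¹ * w).perm (GW.supp B)).filter
            fun C => ¬ GW.cycWt (u⁻¹ * w) C = 0).card = 1 := by
          have := GW.zcount_add_nonzero (u⁻¹ * w) (GW.supp B)
          omega
        have hone := GW.oneCycle_of_count (GW.supp_inv_v hB) hcount1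
        rw [hvw] at hone
        refine Or.inr (Or.inr ⟨?_, ?_, hvw, hne0, hone, aczU⟩)
        · rintro ⟨h0, _, _⟩
          exact hne0 h0
        · rintro ⟨_, _, _, aczV⟩
          have := GW.allCyclesZero_wtTot (GW.supp_inv_v hB) aczV
          rw [hvw] at this
          exact hne0 this
      · -- case (ii)
        have hzu1 : GW.zcount u (GW.supp B) + 1 = (GW.cycIn u.perm (GW.supp B)).card := by omega
        have hzv : GW.zcount (u⁻¹ * w) (GW.supp B) =
            (GW.cycIn (u⁻¹ * w).perm (GW.supp B)).card := by omega
        have aczV : GW.allCyclesZero (u⁻¹ * w) (GW.supp B) :=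
          GW.allCyclesZero_of_count (GW.supp_inv_v hB) hzv
        have hv0 : GW.wtTot (GW.restrict (u⁻¹ * w) (GW.supp B)) = 0 :=
          GW.allCyclesZero_wtTot (GW.supp_inv_v hB) aczV
        have huw : GW.wtTot (GW.restrict u (GW.supp B)) =
            GW.wtTot (GW.restrict w (GW.supp B)) := by rw [hw_split, hv0, add_zero]
        have hcount1 : ((GW.cycIn u.perm (GW.supp B)).filter
            fun C => ¬ GW.cycWt u C = 0).card = 1 := by
          have := GW.zcount_add_nonzero u (GW.supp B)
          omega
        have hone := GW.oneCycle_of_count (GW.supp_inv_u hB) hcount1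
        rw [huw] at hone
        refine Or.inr (Or.inl ⟨?_, ⟨huw, hne0, hone, aczV⟩, ?_⟩)
        · rintro ⟨h0, _, _⟩
          exact hne0 h0
        · rintro ⟨_, _, _, aczU⟩
          have := GW.allCyclesZero_wtTot (GW.supp_inv_u hB) aczU
          rw [huw] at this
          exact hne0 this
end

section
/- Let w ∈ G(m, p, n) be arbitrary and u ∈ [id, w]_{cdf}. Then: (1) codimfix(u) + codimfix(u⁻¹w) = n + c(w) − 2·|Π_u(w)| + #{parts of Π_u(w) of nonzero total weight}; and (2) every part of Π_u(w) is either a singleton or consists of exactly two cycles of w whose weights are nonzero and sum to 0 in ℤ/mℤ. -/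
open Equiv Finset
set_option linter.unusedSectionVars false
set_option linter.unusedVariables false
set_option maxHeartbeats 1000000
open Finset Relation

namespace StmtAux
variable {α : Type*} [Fintype α] [DecidableEq α]

open scoped Classical in
noncomputable def cls (r : α → α → Prop) (i : α) : Finset α :=
  univ.filter fun j => EqvGen r i j

noncomputable def ncl (r : α → α → Prop) : ℕ := (univ.image (cls r)).card

theorem mem_cls {r : α → α → Prop} {i j : α} : j ∈ cls r i ↔ EqvGen r i j := by
  classical simp [cls]

theorem cls_self (r : α → α → Prop) (i : α) : i ∈ cls r i := mem_cls.2 (EqvGen.refl i)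

theorem cls_eq_of {r : α → α → Prop} {i j : α} (h : EqvGen r i j) : cls r i = cls r j := by
  ext k
  simp only [mem_cls]
  exact ⟨fun h2 => (EqvGen.symm _ _ h).trans _ _ _ h2, fun h2 => h.trans _ _ _ h2⟩

theorem eqvGen_of_cls_eq {r : α → α → Prop} {i j : α} (h : cls r i = cls r j) : EqvGen r i j := by
  have := cls_self r j
  rw [← h] at this
  exact mem_cls.1 this

theorem eqvGen_closure {r s : α → α → Prop} (h : ∀ i j, r i j → EqvGen s i j) :
    ∀ {i j : α}, EqvGen r i j → EqvGen s i j := by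
  intro i j hij
  induction hij with
  | rel x y h' => exact h _ _ h'
  | refl x => exact EqvGen.refl x
  | symm x y _ ih => exact EqvGen.symm _ _ ih
  | trans x y z _ _ ih1 ih2 => exact ih1.trans _ _ _ ih2

theorem image_card_le {β γ : Type*} [DecidableEq β] [DecidableEq γ] (s : Finset α)
    (f : α → β) (g : α → γ) (h : ∀ i ∈ s, ∀ j ∈ s, g i = g j → f i = f j) :
    (s.image f).card ≤ (s.image g).card := by
  classical
  rcases s.eq_empty_or_nonempty with rfl | ⟨i0, hi0⟩
  · simp
  · apply Finset.card_le_card_of_surjOn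
      (fun c => if h' : ∃ i ∈ s, g i = c then f h'.choose else f i0)
    intro b hb
    simp only [coe_image, Set.mem_image, mem_coe] at hb ⊢
    obtain ⟨i, his, rfl⟩ := hb
    have hex : ∃ j ∈ s, g j = g i := ⟨i, his, rfl⟩
    refine ⟨g i, ⟨i, his, rfl⟩, ?_⟩
    rw [dif_pos hex]
    exact h _ hex.choose_spec.1 _ his hex.choose_spec.2

theorem ncl_congr {r s : α → α → Prop} (h : ∀ i j, EqvGen r i j ↔ EqvGen s i j) :
    ncl r = ncl s := by
  have hc : cls r = cls s := funext fun i => by ext j; simp only [mem_cls]; exact h i j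
  simp [ncl, hc]

theorem ncl_le {r s : α → α → Prop} (h : ∀ i j, r i j → EqvGen s i j) : ncl s ≤ ncl r := by
  refine image_card_le univ (cls s) (cls r) fun i _ j _ hg => ?_
  exact cls_eq_of (eqvGen_closure h (eqvGen_of_cls_eq hg))

def edg (a b : α) : α → α → Prop := fun i j => i = a ∧ j = b

theorem eqvGen_sup_edge_iff {r : α → α → Prop} {a b i j : α} :
    EqvGen (fun p q => r p q ∨ edg a b p q) i j ↔
      EqvGen r i j ∨ ((EqvGen r i a ∨ EqvGen r i b) ∧ (EqvGen r j a ∨ EqvGen r j b)) := by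
  constructor
  · intro h
    induction h with
    | rel x y h' =>
      rcases h' with h' | ⟨rfl, rfl⟩
      · exact Or.inl (EqvGen.rel _ _ h')
      · exact Or.inr ⟨Or.inl (EqvGen.refl _), Or.inr (EqvGen.refl _)⟩
    | refl x => exact Or.inl (EqvGen.refl x)
    | symm x y _ ih =>
      rcases ih with ih | ⟨h1, h2⟩
      · exact Or.inl (EqvGen.symm _ _ ih)
      · exact Or.inr ⟨h2, h1⟩
    | trans x y z _ _ ih1 ih2 =>
      rcases ih1 with ih1 | ⟨h1, h2⟩ <;> rcases ih2 with ih2 | ⟨h3, h4⟩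
      · exact Or.inl (ih1.trans _ _ _ ih2)
      · exact Or.inr ⟨h3.imp (fun hy => ih1.trans _ _ _ hy) (fun hy => ih1.trans _ _ _ hy), h4⟩
      · exact Or.inr ⟨h1, h2.imp (fun hy => (EqvGen.symm _ _ ih2).trans _ _ _ hy)
          (fun hy => (EqvGen.symm _ _ ih2).trans _ _ _ hy)⟩
      · exact Or.inr ⟨h1, h4⟩
  · intro h
    have toSup : ∀ {x y : α}, EqvGen r x y → EqvGen (fun p q => r p q ∨ edg a b p q) x y :=
      fun hxy => eqvGen_closure (fun p q hpq => EqvGen.rel _ _ (Or.inl hpq)) hxy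
    have hab : EqvGen (fun p q => r p q ∨ edg a b p q) a b := EqvGen.rel _ _ (Or.inr ⟨rfl, rfl⟩)
    rcases h with h | ⟨h1, h2⟩
    · exact toSup h
    · have hia : EqvGen (fun p q => r p q ∨ edg a b p q) i a := by
        rcases h1 with h1 | h1
        · exact toSup h1
        · exact (toSup h1).trans _ _ _ (EqvGen.symm _ _ hab)
      have hja : EqvGen (fun p q => r p q ∨ edg a b p q) j a := by
        rcases h2 with h2 | h2
        · exact toSup h2
        · exact (toSup h2).trans _ _ _ (EqvGen.symm _ _ hab)
      exact hia.trans _ _ _ (EqvGen.symm _ _ hja)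


section EdgeCount
open scoped Classical
variable {r : α → α → Prop} {a b : α}

private theorem hfa_aux :
    ∀ i : α, (EqvGen r i a ∨ EqvGen r i b) →
      cls (fun p q => r p q ∨ edg a b p q) i = cls (fun p q => r p q ∨ edg a b p q) a := by
  intro i hi
  apply cls_eq_of
  apply EqvGen.symm
  exact eqvGen_sup_edge_iff.2 (Or.inr ⟨Or.inl (EqvGen.refl a), hi⟩)

private theorem img_f_eq :
    (univ.image (cls (fun p q => r p q ∨ edg a b p q))).card =
      ((univ.filter fun i => ¬(EqvGen r i a ∨ EqvGen r i b)).image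
        (cls (fun p q => r p q ∨ edg a b p q))).card + 1 := by
  set f := cls (fun p q => r p q ∨ edg a b p q) with hf
  set T := univ.filter fun i => ¬(EqvGen r i a ∨ EqvGen r i b) with hT
  have h1 : univ.image f = insert (f a) (T.image f) := by
    ext c
    simp only [mem_image, mem_insert, T, mem_filter, mem_univ, true_and]
    constructor
    · rintro ⟨i, -, rfl⟩
      by_cases hi : EqvGen r i a ∨ EqvGen r i b
      · exact Or.inl (hfa_aux i hi)
      · exact Or.inr ⟨i, hi, rfl⟩
    · rintro (rfl | ⟨i, -, rfl⟩)
      · exact ⟨a, rfl⟩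
      · exact ⟨i, rfl⟩
  have h2 : f a ∉ T.image f := by
    rintro hmem
    simp only [mem_image, T, mem_filter, mem_univ, true_and] at hmem
    obtain ⟨i, hiT, hfi⟩ := hmem
    have : EqvGen (fun p q => r p q ∨ edg a b p q) i a := eqvGen_of_cls_eq hfi
    rcases eqvGen_sup_edge_iff.1 this with h' | ⟨h', -⟩
    · exact hiT (Or.inl h')
    · exact hiT h'
  rw [h1, card_insert_of_notMem h2]

private theorem img_T_eq :
    ((univ.filter fun i => ¬(EqvGen r i a ∨ EqvGen r i b)).image
        (cls (fun p q => r p q ∨ edg a b p q))).card =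
      ((univ.filter fun i => ¬(EqvGen r i a ∨ EqvGen r i b)).image (cls r)).card := by
  set T := univ.filter fun i => ¬(EqvGen r i a ∨ EqvGen r i b) with hT
  apply le_antisymm
  · refine image_card_le T _ _ fun i hi j hj hg => ?_
    exact cls_eq_of (eqvGen_closure (fun p q hpq => EqvGen.rel _ _ (Or.inl hpq))
      (eqvGen_of_cls_eq hg))
  · refine image_card_le T _ _ fun i hi j hj hg => ?_
    have h' := eqvGen_sup_edge_iff.1 (eqvGen_of_cls_eq hg)
    simp only [T, mem_filter, mem_univ, true_and] at hi
    rcases h' with h' | ⟨h', -⟩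
    · exact cls_eq_of h'
    · exact absurd h' hi

private theorem img_g_sub :
    univ.image (cls r) ⊆
      insert (cls r a) (insert (cls r b)
        ((univ.filter fun i => ¬(EqvGen r i a ∨ EqvGen r i b)).image (cls r))) := by
  intro c hc
  simp only [mem_image, mem_univ, true_and] at hc
  obtain ⟨i, -, rfl⟩ := hc
  by_cases hi : EqvGen r i a ∨ EqvGen r i b
  · rcases hi with hi | hi
    · exact mem_insert.2 (Or.inl (cls_eq_of hi))
    · exact mem_insert.2 (Or.inr (mem_insert.2 (Or.inl (cls_eq_of hi))))
  · refine mem_insert.2 (Or.inr (mem_insert.2 (Or.inr ?_)))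
    simp only [mem_image, mem_filter, mem_univ, true_and]
    exact ⟨i, hi, rfl⟩

theorem ncl_le_sup_edge_succ (r : α → α → Prop) (a b : α) :
    ncl r ≤ ncl (fun p q => r p q ∨ edg a b p q) + 1 := by
  have h1 := img_f_eq (r := r) (a := a) (b := b)
  have h2 := img_T_eq (r := r) (a := a) (b := b)
  have h3 := Finset.card_le_card (img_g_sub (r := r) (a := a) (b := b))
  have h4 := Finset.card_insert_le (cls r a) (insert (cls r b)
    ((univ.filter fun i => ¬(EqvGen r i a ∨ EqvGen r i b)).image (cls r)))
  have h5 := Finset.card_insert_le (cls r b)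
    ((univ.filter fun i => ¬(EqvGen r i a ∨ EqvGen r i b)).image (cls r))
  unfold ncl
  omega

theorem ncl_sup_edge_of_not (r : α → α → Prop) (a b : α) (hab : ¬ EqvGen r a b) :
    ncl (fun p q => r p q ∨ edg a b p q) + 1 = ncl r := by
  set T := univ.filter fun i => ¬(EqvGen r i a ∨ EqvGen r i b) with hT
  have hga : cls r a ∉ T.image (cls r) := by
    rintro hmem
    simp only [mem_image, mem_filter, mem_univ, true_and, T] at hmem
    obtain ⟨i, hiT, hgi⟩ := hmem
    exact hiT (Or.inl (eqvGen_of_cls_eq hgi))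
  have hgb : cls r b ∉ T.image (cls r) := by
    rintro hmem
    simp only [mem_image, mem_filter, mem_univ, true_and, T] at hmem
    obtain ⟨i, hiT, hgi⟩ := hmem
    exact hiT (Or.inr (eqvGen_of_cls_eq hgi))
  have hgab : cls r a ≠ cls r b := fun h => hab (eqvGen_of_cls_eq h)
  have himg : univ.image (cls r) = insert (cls r a) (insert (cls r b) (T.image (cls r))) := by
    apply Finset.Subset.antisymm (img_g_sub (r := r) (a := a) (b := b))
    intro c hc
    simp only [mem_insert, mem_image, mem_filter, mem_univ, true_and, T] at hc ⊢
    rcases hc with rfl | rfl | ⟨i, -, rfl⟩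
    · exact ⟨a, rfl⟩
    · exact ⟨b, rfl⟩
    · exact ⟨i, rfl⟩
  have hcard : (univ.image (cls r)).card = (T.image (cls r)).card + 2 := by
    rw [himg, card_insert_of_notMem, card_insert_of_notMem hgb]
    simp only [mem_insert]
    push_neg
    exact ⟨hgab, hga⟩
  have h1 := img_f_eq (r := r) (a := a) (b := b)
  have h2 := img_T_eq (r := r) (a := a) (b := b)
  rw [← hT] at h1 h2
  unfold ncl
  omega

theorem ncl_sup_edge_of_rel (r : α → α → Prop) (a b : α) (hab : EqvGen r a b) :
    ncl (fun p q => r p q ∨ edg a b p q) = ncl r := by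
  apply ncl_congr
  intro i j
  constructor
  · intro h
    rcases eqvGen_sup_edge_iff.1 h with h' | ⟨h1, h2⟩
    · exact h'
    · have hia : EqvGen r i a := by
        rcases h1 with h1 | h1
        · exact h1
        · exact h1.trans _ _ _ (EqvGen.symm _ _ hab)
      have hja : EqvGen r j a := by
        rcases h2 with h2 | h2
        · exact h2
        · exact h2.trans _ _ _ (EqvGen.symm _ _ hab)
      exact hia.trans _ _ _ (EqvGen.symm _ _ hja)
  · exact fun h => eqvGen_closure (fun p q hpq => EqvGen.rel _ _ (Or.inl hpq)) h

end EdgeCount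

section PermLayer
open Equiv

def pstep (σ : Equiv.Perm α) : α → α → Prop := fun i j => σ i = j

theorem eqvGen_pow (σ : Equiv.Perm α) (k : ℕ) : ∀ i : α, EqvGen (pstep σ) i ((σ ^ k) i) := by
  induction k with
  | zero => intro i; simpa using EqvGen.refl i
  | succ k ih =>
    intro i
    have h : (σ ^ (k + 1)) i = (σ ^ k) (σ i) := by rw [pow_succ, Equiv.Perm.mul_apply]
    rw [h]
    exact (EqvGen.rel i (σ i) (show σ i = σ i from rfl)).trans _ _ _ (ih (σ i))

theorem sameCycle_iff_eqvGen (σ : Equiv.Perm α) (i j : α) :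
    σ.SameCycle i j ↔ EqvGen (pstep σ) i j := by
  constructor
  · intro h
    obtain ⟨k, -, hk⟩ := h.exists_pow_eq'
    rw [← hk]
    exact eqvGen_pow σ k i
  · intro h
    induction h with
    | rel x y h' => exact ⟨1, by simpa [pstep] using h'⟩
    | refl x => exact Equiv.Perm.SameCycle.refl σ x
    | symm x y _ ih => exact ih.symm
    | trans x y z _ _ ih1 ih2 => exact ih1.trans ih2

theorem ncl_one : ncl (pstep (1 : Equiv.Perm α)) = Fintype.card α := by
  have h1 : ∀ i j : α, EqvGen (pstep (1 : Equiv.Perm α)) i j ↔ i = j := by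
    intro i j
    constructor
    · intro h
      induction h with
      | rel x y h' => simpa [pstep] using h'
      | refl x => rfl
      | symm x y _ ih => exact ih.symm
      | trans x y z _ _ ih1 ih2 => exact ih1.trans ih2
    · rintro rfl; exact EqvGen.refl i
  have h2 : ∀ i : α, cls (pstep (1 : Equiv.Perm α)) i = {i} := by
    intro i; ext j
    simp only [mem_cls, h1, mem_singleton]
    exact eq_comm
  rw [ncl, Finset.image_congr (fun i _ => h2 i),
    Finset.card_image_of_injective _ Finset.singleton_injective, card_univ]

theorem pstep_mul_swap_subset {σ : Equiv.Perm α} {x y i j : α}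
    (h : pstep (σ * Equiv.swap x y) i j) :
    EqvGen (fun p q => pstep σ p q ∨ edg x y p q) i j := by
  have h' : σ (Equiv.swap x y i) = j := h
  by_cases hix : i = x
  · subst hix
    rw [Equiv.swap_apply_left] at h'
    exact (EqvGen.rel i y (Or.inr ⟨rfl, rfl⟩)).trans _ _ _ (EqvGen.rel y j (Or.inl h'))
  · by_cases hiy : i = y
    · subst hiy
      rw [Equiv.swap_apply_right] at h'
      exact (EqvGen.symm _ _ (EqvGen.rel x i (Or.inr ⟨rfl, rfl⟩))).trans _ _ _
        (EqvGen.rel x j (Or.inl h'))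
    · rw [Equiv.swap_apply_of_ne_of_ne hix hiy] at h'
      exact EqvGen.rel i j (Or.inl h')

theorem mul_swap_swap (σ : Equiv.Perm α) (x y : α) : (σ * Equiv.swap x y) * Equiv.swap x y = σ := by
  rw [mul_assoc, Equiv.swap_mul_self, mul_one]

theorem eqvGen_swap_edge (σ : Equiv.Perm α) (x y i j : α) :
    EqvGen (fun p q => pstep (σ * Equiv.swap x y) p q ∨ edg x y p q) i j ↔
      EqvGen (fun p q => pstep σ p q ∨ edg x y p q) i j := by
  constructor
  · intro h
    refine eqvGen_closure ?_ h
    rintro p q (hpq | hpq)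
    · exact pstep_mul_swap_subset hpq
    · exact EqvGen.rel _ _ (Or.inr hpq)
  · intro h
    refine eqvGen_closure ?_ h
    rintro p q (hpq | hpq)
    · have : pstep ((σ * Equiv.swap x y) * Equiv.swap x y) p q := by
        rwa [mul_swap_swap]
      exact pstep_mul_swap_subset this
    · exact EqvGen.rel _ _ (Or.inr hpq)

theorem zpow_mem_of_closed {S : Finset α} {σ : Equiv.Perm α} (hS : ∀ z ∈ S, σ z ∈ S)
    {x z : α} (hx : x ∈ S) (h : σ.SameCycle x z) : z ∈ S := by
  obtain ⟨k, -, hk⟩ := h.exists_pow_eq'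
  rw [← hk]
  clear hk h
  induction k generalizing x with
  | zero => simpa using hx
  | succ k ih =>
    have h' : (σ ^ (k + 1)) x = (σ ^ k) (σ x) := by rw [pow_succ, Equiv.Perm.mul_apply]
    rw [h']
    exact ih (hS x hx)

theorem inv_mem_of_closed {S : Finset α} {σ : Equiv.Perm α} (hS : ∀ z ∈ S, σ z ∈ S)
    {x : α} (hx : x ∈ S) : σ⁻¹ x ∈ S := by
  have himg : S.image σ = S := by
    apply Finset.eq_of_subset_of_card_le
    · intro z hz
      obtain ⟨w, hw, rfl⟩ := mem_image.1 hz
      exact hS w hw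
    · rw [Finset.card_image_of_injective _ σ.injective]
  have : x ∈ S.image σ := himg.symm ▸ hx
  obtain ⟨w, hw, hEq⟩ := mem_image.1 this
  have : σ⁻¹ x = w := by rw [← hEq]; simp
  rwa [this]

theorem not_sameCycle_mul_swap {σ : Equiv.Perm α} {x y : α} (hxy : x ≠ y)
    (h : σ.SameCycle x y) : ¬ (σ * Equiv.swap x y).SameCycle x y := by
  classical
  set τ := σ * Equiv.swap x y with hτ
  have hex : ∃ k, 0 < k ∧ (σ ^ k) x = y := by
    obtain ⟨k, hk1, -, hk3⟩ := h.exists_pow_eq''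
    exact ⟨k, hk1, hk3⟩
  set k := Nat.find hex with hkdef
  obtain ⟨hkpos, hky⟩ := Nat.find_spec hex
  have hmin : ∀ j, j < k → ¬(0 < j ∧ (σ ^ j) x = y) := fun j hj => Nat.find_min hex hj
  have hne_x : ∀ j, 1 ≤ j → j ≤ k → (σ ^ j) x ≠ x := by
    intro j h1 h2 hEq
    have hjk : j < k := by
      rcases lt_or_eq_of_le h2 with h' | rfl
      · exact h'
      · rw [hEq] at hky; exact absurd hky hxy
    have hk2 : (σ ^ (k - j)) x = y := by
      have : (σ ^ (k - j)) ((σ ^ j) x) = (σ ^ k) x := by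
        rw [← Equiv.Perm.mul_apply, ← pow_add, Nat.sub_add_cancel h2]
      rw [hEq] at this
      rw [this, hky]
    exact hmin (k - j) (by omega) ⟨by omega, hk2⟩
  have hne_y : ∀ j, 1 ≤ j → j < k → (σ ^ j) x ≠ y := fun j h1 h2 hEq => hmin j h2 ⟨h1, hEq⟩
  set S : Finset α := (Finset.Icc 1 k).image (fun j => (σ ^ j) x) with hS
  have hyS : y ∈ S := by
    apply mem_image.2
    exact ⟨k, Finset.mem_Icc.2 ⟨hkpos, le_rfl⟩, hky⟩
  have hxS : x ∉ S := by
    intro hmem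
    obtain ⟨j, hj, hEq⟩ := mem_image.1 hmem
    rw [Finset.mem_Icc] at hj
    exact hne_x j hj.1 hj.2 hEq
  have hstep : ∀ z ∈ S, τ z ∈ S := by
    intro z hz
    obtain ⟨j, hj, rfl⟩ := mem_image.1 hz
    rw [Finset.mem_Icc] at hj
    by_cases hzy : (σ ^ j) x = y
    · rw [hzy]
      have hτy : τ y = σ x := by
        rw [hτ, Equiv.Perm.mul_apply, Equiv.swap_apply_right]
      rw [hτy]
      exact mem_image.2 ⟨1, Finset.mem_Icc.2 ⟨le_rfl, hkpos⟩, by rw [pow_one]⟩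
    · have hzx : (σ ^ j) x ≠ x := hne_x j hj.1 hj.2
      have hτz : τ ((σ ^ j) x) = σ ((σ ^ j) x) := by
        rw [hτ, Equiv.Perm.mul_apply, Equiv.swap_apply_of_ne_of_ne hzx hzy]
      have hjk : j < k := by
        rcases lt_or_eq_of_le hj.2 with h' | rfl
        · exact h'
        · exact absurd hky hzy
      rw [hτz]
      refine mem_image.2 ⟨j + 1, Finset.mem_Icc.2 ⟨by omega, by omega⟩, ?_⟩
      rw [pow_succ', Equiv.Perm.mul_apply]
  have hcompl : ∀ z, z ∉ S → τ z ∉ S := by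
    intro z hz hzS
    have himg : S.image τ = S := by
      apply Finset.eq_of_subset_of_card_le
      · intro w hw
        obtain ⟨w', hw', rfl⟩ := mem_image.1 hw
        exact hstep w' hw'
      · rw [Finset.card_image_of_injective _ τ.injective]
    rw [← himg] at hzS
    obtain ⟨w, hw, hEq⟩ := mem_image.1 hzS
    have : w = z := τ.injective hEq
    rw [this] at hw
    exact hz hw
  have hiter : ∀ i : ℕ, (τ ^ i) x ∉ S := by
    intro i
    induction i with
    | zero => simpa using hxS
    | succ i ih =>
      have h' : (τ ^ (i + 1)) x = τ ((τ ^ i) x) := by rw [pow_succ', Equiv.Perm.mul_apply]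
      rw [h']
      exact hcompl _ ih
  intro hSC
  obtain ⟨i, -, hi⟩ := hSC.exists_pow_eq'
  exact hiter i (hi.symm ▸ hyS)

theorem sameCycle_mul_swap {σ : Equiv.Perm α} {x y : α} (hxy : x ≠ y)
    (h : ¬ σ.SameCycle x y) : (σ * Equiv.swap x y).SameCycle x y := by
  classical
  set τ := σ * Equiv.swap x y with hτ
  have hex : ∃ k, 0 < k ∧ (σ ^ k) y = y :=
    ⟨orderOf σ, orderOf_pos σ, by rw [pow_orderOf_eq_one]; rfl⟩
  set k := Nat.find hex with hkdef
  obtain ⟨hkpos, hky⟩ := Nat.find_spec hex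
  have hmin : ∀ j, j < k → ¬(0 < j ∧ (σ ^ j) y = y) := fun j hj => Nat.find_min hex hj
  have hne_y : ∀ j, 1 ≤ j → j < k → (σ ^ j) y ≠ y := fun j h1 h2 hEq => hmin j h2 ⟨h1, hEq⟩
  have hne_x : ∀ j : ℕ, (σ ^ j) y ≠ x := by
    intro j hEq
    exact h (Equiv.Perm.SameCycle.symm ⟨(j : ℤ), by rw [zpow_natCast, hEq]⟩)
  have key : ∀ j, 1 ≤ j → j ≤ k → (τ ^ j) x = (σ ^ j) y := by
    intro j hj
    induction j, hj using Nat.le_induction with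
    | base =>
      intro _
      rw [pow_one, pow_one, hτ, Equiv.Perm.mul_apply, Equiv.swap_apply_left]
    | succ j hj ih =>
      intro hjk
      have hjk' : j ≤ k := by omega
      have hjlt : j < k := by omega
      have ihj := ih hjk'
      have h1 : (τ ^ (j + 1)) x = τ ((τ ^ j) x) := by rw [pow_succ', Equiv.Perm.mul_apply]
      rw [h1, ihj]
      have hzx : (σ ^ j) y ≠ x := hne_x j
      have hzy : (σ ^ j) y ≠ y := hne_y j hj hjlt
      rw [hτ, Equiv.Perm.mul_apply, Equiv.swap_apply_of_ne_of_ne hzx hzy]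
      rw [pow_succ', Equiv.Perm.mul_apply]
  have hfin : (τ ^ k) x = y := by rw [key k hkpos le_rfl, hky]
  exact ⟨(k : ℤ), by rw [zpow_natCast, hfin]⟩

theorem ncl_split {σ : Equiv.Perm α} {x y : α} (hxy : x ≠ y) (h : σ.SameCycle x y) :
    ncl (pstep (σ * Equiv.swap x y)) = ncl (pstep σ) + 1 := by
  have hD2 := not_sameCycle_mul_swap hxy h
  have h1 := ncl_sup_edge_of_not (pstep (σ * Equiv.swap x y)) x y
    (fun hE => hD2 ((sameCycle_iff_eqvGen _ _ _).2 hE))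
  have h2 : ncl (fun p q => pstep (σ * Equiv.swap x y) p q ∨ edg x y p q) =
      ncl (fun p q => pstep σ p q ∨ edg x y p q) :=
    ncl_congr (fun i j => eqvGen_swap_edge σ x y i j)
  have h3 := ncl_sup_edge_of_rel (pstep σ) x y ((sameCycle_iff_eqvGen _ _ _).1 h)
  omega

theorem ncl_merge {σ : Equiv.Perm α} {x y : α} (hxy : x ≠ y) (h : ¬ σ.SameCycle x y) :
    ncl (pstep (σ * Equiv.swap x y)) + 1 = ncl (pstep σ) := by
  have hD1 := sameCycle_mul_swap hxy h
  have h1 := ncl_sup_edge_of_rel (pstep (σ * Equiv.swap x y)) x y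
    ((sameCycle_iff_eqvGen _ _ _).1 hD1)
  have h2 : ncl (fun p q => pstep (σ * Equiv.swap x y) p q ∨ edg x y p q) =
      ncl (fun p q => pstep σ p q ∨ edg x y p q) :=
    ncl_congr (fun i j => eqvGen_swap_edge σ x y i j)
  have h3 := ncl_sup_edge_of_not (pstep σ) x y
    (fun hE => h ((sameCycle_iff_eqvGen _ _ _).2 hE))
  omega

theorem ncl_swap_ge (σ : Equiv.Perm α) (x y : α) (hxy : x ≠ y) :
    ncl (pstep σ) ≤ ncl (pstep (σ * Equiv.swap x y)) + 1 := by
  by_cases h : σ.SameCycle x y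
  · have := ncl_split hxy h; omega
  · have := ncl_merge hxy h; omega

end PermLayer

section Genus
open Equiv

def jstep (σ τ : Equiv.Perm α) : α → α → Prop := fun i j => σ i = j ∨ τ i = j

theorem eqvGen_pstep_le_jstep_left {σ τ : Equiv.Perm α} {i j : α}
    (h : EqvGen (pstep σ) i j) : EqvGen (jstep σ τ) i j :=
  eqvGen_closure (fun p q hpq => EqvGen.rel _ _ (Or.inl hpq)) h

theorem eqvGen_swap_step {R : α → α → Prop} {a b z q : α} (h : Equiv.swap a b z = q) :
    EqvGen (fun p r => R p r ∨ edg a b p r) z q := by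
  by_cases hz : z = a
  · subst hz
    rw [Equiv.swap_apply_left] at h
    subst h
    exact EqvGen.rel _ _ (Or.inr ⟨rfl, rfl⟩)
  · by_cases hz' : z = b
    · subst hz'
      rw [Equiv.swap_apply_right] at h
      subst h
      exact EqvGen.symm _ _ (EqvGen.rel _ _ (Or.inr ⟨rfl, rfl⟩))
    · rw [Equiv.swap_apply_of_ne_of_ne hz hz'] at h
      subst h
      exact EqvGen.refl z

theorem genus_one (u : Equiv.Perm α) :
    ncl (pstep u) + ncl (pstep (1 : Equiv.Perm α)) + ncl (pstep (u * 1)) ≤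
      Fintype.card α + 2 * ncl (jstep u 1) := by
  rw [mul_one, ncl_one]
  have h : ncl (jstep u 1) = ncl (pstep u) := by
    apply ncl_congr
    intro i j
    constructor
    · intro h
      refine eqvGen_closure ?_ h
      rintro p q (hpq | hpq)
      · exact EqvGen.rel _ _ hpq
      · have : p = q := by simpa using hpq
        rw [this]
        exact EqvGen.refl q
    · exact fun h => eqvGen_closure (fun p q hpq => EqvGen.rel _ _ (Or.inl hpq)) h
  omega

theorem genus_aux : ∀ (N : ℕ) (v u : Equiv.Perm α),
    (univ.filter fun i => v i ≠ i).card ≤ N →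
    ncl (pstep u) + ncl (pstep v) + ncl (pstep (u * v)) ≤
      Fintype.card α + 2 * ncl (jstep u v) := by
  intro N
  induction N with
  | zero =>
    intro v u hv
    have hv1 : v = 1 := by
      ext i
      by_contra hne
      have : i ∈ univ.filter fun i => v i ≠ i := by
        simp only [mem_filter, mem_univ, true_and]
        simpa using hne
      rw [Finset.card_eq_zero.mp (Nat.le_zero.1 hv)] at this
      simp at this
    subst hv1
    exact genus_one u
  | succ N ih =>
    intro v u hv
    by_cases hv1 : v = 1
    · subst hv1; exact genus_one u
    · -- pick a non-fixed point
      have hbex : ∃ b, v b ≠ b := by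
        by_contra hcon
        push_neg at hcon
        exact hv1 (Equiv.ext fun i => by simpa using hcon i)
      obtain ⟨b, hb⟩ := hbex
      set a := v b with ha
      have hab : a ≠ b := hb
      set t := Equiv.swap a b with ht
      set u' := u * t with hu'
      set v' := t * v with hv'
      have huv : u' * v' = u * v := by
        rw [hu', hv', mul_assoc, ← mul_assoc t t v, ht, Equiv.swap_mul_self, one_mul]
      -- measure decreases
      have hsub : (univ.filter fun i => v' i ≠ i) ⊆ (univ.filter fun i => v i ≠ i) := by
        intro i hi
        simp only [mem_filter, mem_univ, true_and] at hi ⊢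
        intro hvi
        apply hi
        have hia : i ≠ a := by
          rintro rfl
          exact hab (v.injective (hvi.trans ha))
        have hib : i ≠ b := by
          rintro rfl
          exact hab (ha.trans hvi)
        rw [hv', Equiv.Perm.mul_apply, hvi, ht, Equiv.swap_apply_of_ne_of_ne hia hib]
      have hbmem : b ∈ univ.filter fun i => v i ≠ i := by
        simp only [mem_filter, mem_univ, true_and]
        exact fun h => hab (ha.trans h)
      have hbnot : b ∉ univ.filter fun i => v' i ≠ i := by
        simp only [mem_filter, mem_univ, true_and, not_not]
        rw [hv', Equiv.Perm.mul_apply, ← ha, ht, Equiv.swap_apply_left]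
      have hcard : (univ.filter fun i => v' i ≠ i).card ≤ N := by
        have hss : (univ.filter fun i => v' i ≠ i) ⊂ (univ.filter fun i => v i ≠ i) :=
          ⟨hsub, fun hsub' => hbnot (hsub' hbmem)⟩
        have := Finset.card_lt_card hss
        omega
      have IH := ih v' u' hcard
      rw [huv] at IH
      -- split lemma for v
      have hbv : b ≠ v⁻¹ b := by
        intro h
        have hvb : v b = b := by
          conv_lhs => rw [h]
          exact v.apply_symm_apply b
        exact hab (ha.trans hvb)
      have hv'eq : v' = v * Equiv.swap b (v⁻¹ b) := by
        have h2 := Equiv.swap_apply_apply v b (v⁻¹ b)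
        rw [show v (v⁻¹ b) = b from v.apply_symm_apply b] at h2
        have h3 : t = v * Equiv.swap b (v⁻¹ b) * v⁻¹ := by
          rw [ht, ha]
          exact h2
        rw [hv', h3, inv_mul_cancel_right]
      have hSCv : v.SameCycle b (v⁻¹ b) := ⟨-1, by simp⟩
      have hsplit : ncl (pstep v') = ncl (pstep v) + 1 := by
        rw [hv'eq]
        exact ncl_split hbv hSCv
      have hjSE : ∀ i j, EqvGen (fun p q => jstep u' v' p q ∨ edg a b p q) i j ↔
          EqvGen (fun p q => jstep u v p q ∨ edg a b p q) i j := by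
        intro i j
        constructor
        · intro h
          refine eqvGen_closure ?_ h
          rintro p q ((hpq | hpq) | hpq)
          · have hq : u (t p) = q := by rw [← hpq, hu']; rfl
            exact (eqvGen_swap_step (R := jstep u v) (show Equiv.swap a b p = t p by rw [ht])).trans
              _ _ _ (EqvGen.rel _ _ (Or.inl (Or.inl hq)))
          · have hq : Equiv.swap a b (v p) = q := by rw [← hpq, hv', ← ht]; rfl
            exact (EqvGen.rel p (v p) (Or.inl (Or.inr rfl))).trans _ _ _ (eqvGen_swap_step hq)
          · exact EqvGen.rel _ _ (Or.inr hpq)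
        · intro h
          refine eqvGen_closure ?_ h
          rintro p q ((hpq | hpq) | hpq)
          · have hq : u' (t p) = q := by
              rw [← hpq, hu', Equiv.Perm.mul_apply, ht, Equiv.swap_apply_self]
            exact (eqvGen_swap_step (R := jstep u' v') (show Equiv.swap a b p = t p by rw [ht])).trans
              _ _ _ (EqvGen.rel _ _ (Or.inl (Or.inl hq)))
          · have hq : Equiv.swap a b (v' p) = q := by
              rw [← hpq, hv', Equiv.Perm.mul_apply, ht, Equiv.swap_apply_self]
            exact (EqvGen.rel p (v' p) (Or.inl (Or.inr rfl))).trans _ _ _ (eqvGen_swap_step hq)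
          · exact EqvGen.rel _ _ (Or.inr hpq)
      have hue : u' * Equiv.swap a b = u := by
        rw [hu', ht]
        exact mul_swap_swap u a b
      by_cases hconn : EqvGen (jstep u' v') a b
      · have horb : ncl (jstep u' v') ≤ ncl (jstep u v) := by
          have h1 := ncl_sup_edge_of_rel (jstep u' v') a b hconn
          have h2 : ncl (fun p q => jstep u' v' p q ∨ edg a b p q) =
              ncl (fun p q => jstep u v p q ∨ edg a b p q) := ncl_congr hjSE
          have h3 : ncl (fun p q => jstep u v p q ∨ edg a b p q) ≤ ncl (jstep u v) :=
            ncl_le (fun p q hpq => EqvGen.rel _ _ (Or.inl hpq))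
          omega
        have hu2 : ncl (pstep u) ≤ ncl (pstep u') + 1 := by
          have h := ncl_swap_ge u a b hab
          rw [← ht, ← hu'] at h
          exact h
        omega
      · have hnsc : ¬ u'.SameCycle a b := fun hsc =>
          hconn (eqvGen_closure (fun p q hpq => EqvGen.rel _ _ (Or.inl hpq))
            ((sameCycle_iff_eqvGen u' a b).1 hsc))
        have hu2 : ncl (pstep u) + 1 = ncl (pstep u') := by
          have h := ncl_merge hab hnsc
          rw [hue] at h
          exact h
        have horb : ncl (jstep u' v') ≤ ncl (jstep u v) + 1 := by
          have h1 := ncl_sup_edge_of_not (jstep u' v') a b hconn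
          have h2 : ncl (fun p q => jstep u' v' p q ∨ edg a b p q) =
              ncl (fun p q => jstep u v p q ∨ edg a b p q) := ncl_congr hjSE
          have h3 : ncl (fun p q => jstep u v p q ∨ edg a b p q) ≤ ncl (jstep u v) :=
            ncl_le (fun p q hpq => EqvGen.rel _ _ (Or.inl hpq))
          omega
        omega

theorem genus (u v : Equiv.Perm α) :
    ncl (pstep u) + ncl (pstep v) + ncl (pstep (u * v)) ≤
      Fintype.card α + 2 * ncl (jstep u v) :=
  genus_aux _ v u le_rfl

end Genus

section GWLayer
open GW Equiv

variable {m n : ℕ}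

theorem mem_cycleOf {x : GW m n} {i j : Fin n} : j ∈ x.cycleOf i ↔ x.perm.SameCycle i j := by
  simp [GW.cycleOf]

theorem self_mem_cycleOf (x : GW m n) (i : Fin n) : i ∈ x.cycleOf i :=
  mem_cycleOf.2 (Equiv.Perm.SameCycle.refl _ _)

theorem cycleOf_mem_cycles (x : GW m n) (i : Fin n) : x.cycleOf i ∈ GW.cycles x :=
  Finset.mem_image_of_mem _ (Finset.mem_univ i)

theorem cycleOf_eq_cycleOf {x : GW m n} {p q : Fin n} (h : x.perm.SameCycle p q) :
    x.cycleOf p = x.cycleOf q := by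
  ext r
  simp only [mem_cycleOf]
  exact ⟨fun hr => h.symm.trans hr, fun hr => h.trans hr⟩

theorem cycleOf_eq_of_mem {x : GW m n} {C : Finset (Fin n)} {i : Fin n}
    (hC : C ∈ GW.cycles x) (hi : i ∈ C) : C = x.cycleOf i := by
  obtain ⟨i0, -, rfl⟩ := Finset.mem_image.1 hC
  exact cycleOf_eq_cycleOf (mem_cycleOf.1 hi)

theorem cycle_nonempty {x : GW m n} {C : Finset (Fin n)} (hC : C ∈ GW.cycles x) :
    C.Nonempty := by
  obtain ⟨i0, -, rfl⟩ := Finset.mem_image.1 hC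
  exact ⟨i0, self_mem_cycleOf x i0⟩

theorem sameCycle_of_mem {x : GW m n} {C : Finset (Fin n)} {i j : Fin n}
    (hC : C ∈ GW.cycles x) (hi : i ∈ C) (hj : j ∈ C) : x.perm.SameCycle i j :=
  mem_cycleOf.1 (cycleOf_eq_of_mem hC hi ▸ hj)

theorem cycles_eq_of_mem {x : GW m n} {C C' : Finset (Fin n)} {i : Fin n}
    (hC : C ∈ GW.cycles x) (hC' : C' ∈ GW.cycles x) (hi : i ∈ C) (hi' : i ∈ C') : C = C' :=
  (cycleOf_eq_of_mem hC hi).trans (cycleOf_eq_of_mem hC' hi').symm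

theorem cycleOf_eq_cls (x : GW m n) (i : Fin n) : x.cycleOf i = cls (pstep x.perm) i := by
  ext j
  simp [GW.cycleOf, mem_cls, sameCycle_iff_eqvGen]

theorem numCycles_eq_ncl (x : GW m n) : GW.numCycles x = ncl (pstep x.perm) := by
  unfold GW.numCycles GW.cycles ncl
  congr 1
  exact Finset.image_congr fun i _ => cycleOf_eq_cls x i

-- piRel / piPart basics
theorem mem_piPart {u w : GW m n} {C C' : Finset (Fin n)} :
    C' ∈ GW.piPart u w C ↔ C' ∈ GW.cycles w ∧ GW.piRel u w C C' := by
  classical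
  simp [GW.piPart, Finset.filter_congr_decidable]

theorem piPart_eq_of_rel {u w : GW m n} {C C' : Finset (Fin n)} (h : GW.piRel u w C C') :
    GW.piPart u w C = GW.piPart u w C' := by
  ext D
  simp only [mem_piPart]
  constructor
  · rintro ⟨h1, h2⟩
    exact ⟨h1, (Relation.EqvGen.symm _ _ h).trans _ _ _ h2⟩
  · rintro ⟨h1, h2⟩
    exact ⟨h1, Relation.EqvGen.trans _ _ _ h h2⟩

theorem self_mem_piPart {u w : GW m n} {C : Finset (Fin n)} (hC : C ∈ GW.cycles w) :
    C ∈ GW.piPart u w C :=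
  mem_piPart.2 ⟨hC, Relation.EqvGen.refl C⟩

theorem piPart_subset {u w : GW m n} {C : Finset (Fin n)} :
    GW.piPart u w C ⊆ GW.cycles w := fun D hD => (mem_piPart.1 hD).1

theorem piParts_subset {u w : GW m n} {B : Finset (Finset (Fin n))}
    (hB : B ∈ GW.piParts u w) : B ⊆ GW.cycles w := by
  obtain ⟨C, -, rfl⟩ := Finset.mem_image.1 hB
  exact piPart_subset

theorem piPart_eq_of_mem {u w : GW m n} {B : Finset (Finset (Fin n))} {C : Finset (Fin n)}
    (hB : B ∈ GW.piParts u w) (hC : C ∈ B) : B = GW.piPart u w C := by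
  obtain ⟨C0, -, rfl⟩ := Finset.mem_image.1 hB
  exact piPart_eq_of_rel (mem_piPart.1 hC).2

theorem piParts_disjoint {u w : GW m n} {B B' : Finset (Finset (Fin n))} {C : Finset (Fin n)}
    (hB : B ∈ GW.piParts u w) (hB' : B' ∈ GW.piParts u w) (hC : C ∈ B) (hC' : C ∈ B') :
    B = B' :=
  (piPart_eq_of_mem hB hC).trans (piPart_eq_of_mem hB' hC').symm

theorem biUnion_piParts (u w : GW m n) :
    (GW.piParts u w).biUnion id = GW.cycles w := by
  ext C
  simp only [Finset.mem_biUnion, id]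
  constructor
  · rintro ⟨B, hB, hC⟩
    exact piParts_subset hB hC
  · intro hC
    exact ⟨GW.piPart u w C, Finset.mem_image_of_mem _ hC, self_mem_piPart hC⟩

theorem piParts_pairwiseDisjoint (u w : GW m n) :
    ∀ B ∈ GW.piParts u w, ∀ B' ∈ GW.piParts u w, B ≠ B' → Disjoint B B' := by
  intro B hB B' hB' hne
  rw [Finset.disjoint_left]
  intro C hC hC'
  exact hne (piParts_disjoint hB hB' hC hC')

theorem cycles_in_part_pairwiseDisjoint {u w : GW m n} {B : Finset (Finset (Fin n))}
    (hB : B ∈ GW.piParts u w) :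
    ∀ C ∈ B, ∀ C' ∈ B, C ≠ C' → Disjoint C C' := by
  intro C hC C' hC' hne
  rw [Finset.disjoint_left]
  intro i hi hi'
  exact hne (cycles_eq_of_mem (piParts_subset hB hC) (piParts_subset hB hC') hi hi')

theorem sum_parts (u w : GW m n) {β : Type*} [AddCommMonoid β] (f : Finset (Fin n) → β) :
    ∑ B ∈ GW.piParts u w, ∑ C ∈ B, f C = ∑ C ∈ GW.cycles w, f C := by
  classical
  have hd : Set.PairwiseDisjoint ↑(GW.piParts u w) (id : Finset (Finset (Fin n)) → Finset (Finset (Fin n))) := by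
    intro B hB B' hB' hne
    exact piParts_pairwiseDisjoint u w B hB B' hB' hne
  rw [← biUnion_piParts u w, Finset.sum_biUnion hd]
  rfl

-- piRel vs jstep
theorem piRel_iff (u w : GW m n) (i j : Fin n) :
    GW.piRel u w (w.cycleOf i) (w.cycleOf j) ↔ EqvGen (jstep u.perm w.perm) i j := by
  have wE : ∀ {p q : Fin n}, w.perm.SameCycle p q → EqvGen (jstep u.perm w.perm) p q :=
    fun h => eqvGen_closure (fun p q hpq => Relation.EqvGen.rel _ _ (Or.inr hpq))
      ((sameCycle_iff_eqvGen _ _ _).1 h)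
  have uE : ∀ {p q : Fin n}, u.perm.SameCycle p q → EqvGen (jstep u.perm w.perm) p q :=
    fun h => eqvGen_closure (fun p q hpq => Relation.EqvGen.rel _ _ (Or.inl hpq))
      ((sameCycle_iff_eqvGen _ _ _).1 h)
  constructor
  · intro h
    have H : ∀ C C', GW.piRel u w C C' → C = C' ∨
        (C ∈ GW.cycles w ∧ C' ∈ GW.cycles w ∧
          ∀ p ∈ C, ∀ q ∈ C', EqvGen (jstep u.perm w.perm) p q) := by
      intro C C' hCC'
      induction hCC' with
      | rel C1 C2 hb =>
        obtain ⟨h1, h2, D, hD, ⟨p1, hp1⟩, ⟨p2, hp2⟩⟩ := hb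
        rw [Finset.mem_inter] at hp1 hp2
        right
        refine ⟨h1, h2, fun p hp q hq => ?_⟩
        have e1 := wE (sameCycle_of_mem h1 hp hp1.2)
        have e2 := uE (sameCycle_of_mem hD hp1.1 hp2.1)
        have e3 := wE (sameCycle_of_mem h2 hp2.2 hq)
        exact e1.trans _ _ _ (e2.trans _ _ _ e3)
      | refl C => exact Or.inl rfl
      | symm C1 C2 _ ih =>
        rcases ih with rfl | ⟨h1, h2, hpq⟩
        · exact Or.inl rfl
        · exact Or.inr ⟨h2, h1, fun p hp q hq => Relation.EqvGen.symm _ _ (hpq q hq p hp)⟩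
      | trans C1 C2 C3 _ _ ih1 ih2 =>
        rcases ih1 with rfl | ⟨h1, h2, hpq1⟩
        · exact ih2
        · rcases ih2 with rfl | ⟨h2', h3, hpq2⟩
          · exact Or.inr ⟨h1, h2, hpq1⟩
          · obtain ⟨k, hk⟩ := cycle_nonempty h2
            exact Or.inr ⟨h1, h3, fun p hp q hq =>
              (hpq1 p hp k hk).trans _ _ _ (hpq2 k hk q hq)⟩
    rcases H _ _ h with hEq | ⟨-, -, hpq⟩
    · have hj : j ∈ w.cycleOf i := hEq ▸ self_mem_cycleOf w j
      exact wE (mem_cycleOf.1 hj)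
    · exact hpq i (self_mem_cycleOf w i) j (self_mem_cycleOf w j)
  · intro h
    induction h with
    | rel p q hpq =>
      rcases hpq with hu | hw
      · apply Relation.EqvGen.rel
        refine ⟨cycleOf_mem_cycles w p, cycleOf_mem_cycles w q, u.cycleOf p,
          cycleOf_mem_cycles u p, ⟨p, ?_⟩, ⟨q, ?_⟩⟩
        · exact Finset.mem_inter.2 ⟨self_mem_cycleOf u p, self_mem_cycleOf w p⟩
        · refine Finset.mem_inter.2 ⟨?_, self_mem_cycleOf w q⟩
          exact mem_cycleOf.2 ⟨1, by simpa using hu⟩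
      · have : w.cycleOf p = w.cycleOf q := cycleOf_eq_cycleOf ⟨1, by simpa using hw⟩
        rw [this]
        exact Relation.EqvGen.refl _
    | refl p => exact Relation.EqvGen.refl _
    | symm p q _ ih => exact Relation.EqvGen.symm _ _ ih
    | trans p q r _ _ ih1 ih2 => exact ih1.trans _ _ _ ih2

theorem card_piParts (u w : GW m n) : (GW.piParts u w).card = ncl (jstep u.perm w.perm) := by
  classical
  have h1 : GW.piParts u w = univ.image (fun i => GW.piPart u w (w.cycleOf i)) := by
    unfold GW.piParts GW.cycles
    rw [Finset.image_image]
    rfl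
  have key : ∀ i j : Fin n, GW.piPart u w (w.cycleOf i) = GW.piPart u w (w.cycleOf j) ↔
      cls (jstep u.perm w.perm) i = cls (jstep u.perm w.perm) j := by
    intro i j
    constructor
    · intro h
      have : w.cycleOf j ∈ GW.piPart u w (w.cycleOf i) :=
        h ▸ self_mem_piPart (cycleOf_mem_cycles w j)
      exact cls_eq_of ((piRel_iff u w i j).1 (mem_piPart.1 this).2)
    · intro h
      exact piPart_eq_of_rel ((piRel_iff u w i j).2 (eqvGen_of_cls_eq h))
  rw [h1, ncl]
  apply le_antisymm
  · exact image_card_le univ _ _ fun i _ j _ hg => (key i j).2 hg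
  · exact image_card_le univ _ _ fun i _ j _ hg => (key i j).1 hg

end GWLayer

section SuppLayer
open GW Equiv

theorem mem_supp {B : Finset (Finset (Fin n))} {x : Fin n} :
    x ∈ GW.supp B ↔ ∃ C ∈ B, x ∈ C := by
  simp [GW.supp, Finset.mem_sup]

theorem cycleOf_mem_of_mem_supp {u w : GW m n} {B : Finset (Finset (Fin n))}
    (hB : B ∈ GW.piParts u w) {x : Fin n} (hx : x ∈ GW.supp B) : w.cycleOf x ∈ B := by
  obtain ⟨C, hC, hxC⟩ := mem_supp.1 hx
  exact (cycleOf_eq_of_mem (piParts_subset hB hC) hxC) ▸ hC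

theorem supp_closed_u {u w : GW m n} {B : Finset (Finset (Fin n))}
    (hB : B ∈ GW.piParts u w) : ∀ x ∈ GW.supp B, u.perm x ∈ GW.supp B := by
  intro x hx
  have h1 : w.cycleOf x ∈ B := cycleOf_mem_of_mem_supp hB hx
  have hbase : GW.piRelBase u w (w.cycleOf x) (w.cycleOf (u.perm x)) := by
    refine ⟨cycleOf_mem_cycles w x, cycleOf_mem_cycles w _, u.cycleOf x,
      cycleOf_mem_cycles u x, ⟨x, ?_⟩, ⟨u.perm x, ?_⟩⟩
    · exact Finset.mem_inter.2 ⟨self_mem_cycleOf u x, self_mem_cycleOf w x⟩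
    · refine Finset.mem_inter.2 ⟨?_, self_mem_cycleOf w _⟩
      exact mem_cycleOf.2 ⟨1, by simp⟩
  have h2 : w.cycleOf (u.perm x) ∈ B := by
    rw [piPart_eq_of_mem hB h1]
    exact mem_piPart.2 ⟨cycleOf_mem_cycles w _, Relation.EqvGen.rel _ _ hbase⟩
  exact mem_supp.2 ⟨_, h2, self_mem_cycleOf w _⟩

theorem supp_closed_w {u w : GW m n} {B : Finset (Finset (Fin n))}
    (hB : B ∈ GW.piParts u w) : ∀ x ∈ GW.supp B, w.perm x ∈ GW.supp B := by
  intro x hx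
  have h1 : w.cycleOf x ∈ B := cycleOf_mem_of_mem_supp hB hx
  refine mem_supp.2 ⟨w.cycleOf x, h1, ?_⟩
  exact mem_cycleOf.2 ⟨1, by simp⟩

theorem supp_closed_v {u w : GW m n} {B : Finset (Finset (Fin n))}
    (hB : B ∈ GW.piParts u w) : ∀ x ∈ GW.supp B, (u⁻¹ * w).perm x ∈ GW.supp B := by
  intro x hx
  have h1 : (u⁻¹ * w).perm x = u.perm⁻¹ (w.perm x) := rfl
  rw [h1]
  exact inv_mem_of_closed (supp_closed_u hB) (supp_closed_w hB x hx)

theorem ucycle_subset_supp {u w : GW m n} {B : Finset (Finset (Fin n))}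
    (hB : B ∈ GW.piParts u w) {x : Fin n} (hx : x ∈ GW.supp B) :
    u.cycleOf x ⊆ GW.supp B := by
  intro z hz
  exact zpow_mem_of_closed (supp_closed_u hB) hx (mem_cycleOf.1 hz)

theorem vcycle_subset_supp {u w : GW m n} {B : Finset (Finset (Fin n))}
    (hB : B ∈ GW.piParts u w) {x : Fin n} (hx : x ∈ GW.supp B) :
    (u⁻¹ * w).cycleOf x ⊆ GW.supp B := by
  intro z hz
  exact zpow_mem_of_closed (supp_closed_v hB) hx (mem_cycleOf.1 hz)

theorem partWt_eq_sum_supp {u w : GW m n} {B : Finset (Finset (Fin n))}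
    (hB : B ∈ GW.piParts u w) : GW.partWt w B = ∑ x ∈ GW.supp B, w.wt x := by
  classical
  unfold GW.partWt GW.cycWt
  have hsupp : GW.supp B = B.biUnion id := Finset.sup_eq_biUnion B id
  rw [hsupp, Finset.sum_biUnion]
  · rfl
  · intro C hC C' hC' hne
    exact cycles_in_part_pairwiseDisjoint hB C hC C' hC' hne

theorem sum_wt_eq_zero {x : GW m n} {S : Finset (Fin n)}
    (hcyc : ∀ p ∈ S, x.cycleOf p ⊆ S)
    (hz : ∀ C ∈ GW.cycles x, C ⊆ S → GW.cycWt x C = 0) :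
    ∑ p ∈ S, x.wt p = 0 := by
  classical
  have hS : S = ((GW.cycles x).filter (· ⊆ S)).biUnion id := by
    ext p
    simp only [Finset.mem_biUnion, Finset.mem_filter, id]
    constructor
    · intro hp
      exact ⟨x.cycleOf p, ⟨cycleOf_mem_cycles x p, hcyc p hp⟩, self_mem_cycleOf x p⟩
    · rintro ⟨C, ⟨hC1, hC2⟩, hpC⟩
      exact hC2 hpC
  rw [hS, Finset.sum_biUnion]
  · apply Finset.sum_eq_zero
    intro C hC
    rw [Finset.mem_filter] at hC
    exact hz C hC.1 hC.2
  · intro C hC C' hC' hne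
    rw [Finset.mem_coe, Finset.mem_filter] at hC hC'
    have hd : Disjoint C C' := by
      rw [Finset.disjoint_left]
      intro i hi hi'
      exact hne (cycles_eq_of_mem hC.1 hC'.1 hi hi')
    exact hd

theorem exists_nonzero_cycle_of_partWt {u w : GW m n} {B : Finset (Finset (Fin n))}
    (hB : B ∈ GW.piParts u w) (hnz : GW.partWt w B ≠ 0) :
    (∃ D ∈ GW.cycles u, D ⊆ GW.supp B ∧ GW.cycWt u D ≠ 0) ∨
      (∃ D ∈ GW.cycles (u⁻¹ * w), D ⊆ GW.supp B ∧ GW.cycWt (u⁻¹ * w) D ≠ 0) := by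
  classical
  by_contra hcon
  push_neg at hcon
  obtain ⟨h1, h2⟩ := hcon
  apply hnz
  rw [partWt_eq_sum_supp hB]
  set v := u⁻¹ * w with hv
  have huvw : u * v = w := by rw [hv]; group
  have hwwt : ∀ p, w.wt p = u.wt p + v.wt (u.perm⁻¹ p) := by
    intro p
    rw [← huvw]
    rfl
  rw [Finset.sum_congr rfl (fun p _ => hwwt p), Finset.sum_add_distrib]
  have hA : ∑ p ∈ GW.supp B, u.wt p = 0 := by
    apply sum_wt_eq_zero (fun p hp => ucycle_subset_supp hB hp)
    intro C hC hCs
    by_contra hne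
    exact hne (h1 C hC hCs)
  have hBv : ∑ p ∈ GW.supp B, v.wt (u.perm⁻¹ p) = ∑ p ∈ GW.supp B, v.wt p := by
    apply Finset.sum_nbij' (fun p => u.perm⁻¹ p) (fun p => u.perm p)
    · intro p hp
      exact inv_mem_of_closed (supp_closed_u hB) hp
    · intro p hp
      exact supp_closed_u hB p hp
    · intro p hp
      simp
    · intro p hp
      simp
    · intro p hp
      rfl
  have hCv : ∑ p ∈ GW.supp B, v.wt p = 0 := by
    apply sum_wt_eq_zero (fun p hp => vcycle_subset_supp hB hp)
    intro C hC hCs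
    by_contra hne
    exact hne (h2 C hC hCs)
  rw [hA, hBv, hCv, add_zero]

theorem nzparts_le (u w : GW m n) :
    GW.piPartsNonzeroWt u w ≤
      ((GW.cycles u).filter fun C => ¬ GW.cycWt u C = 0).card +
        ((GW.cycles (u⁻¹ * w)).filter fun C => ¬ GW.cycWt (u⁻¹ * w) C = 0).card := by
  classical
  have hPP : GW.piPartsNonzeroWt u w =
      ((GW.piParts u w).filter fun B => GW.partWt w B ≠ 0).card := by
    unfold GW.piPartsNonzeroWt
    congr 1
  set P' := (GW.piParts u w).filter fun B => GW.partWt w B ≠ 0 with hP'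
  set Pu := P'.filter (fun B => ∃ D ∈ GW.cycles u, D ⊆ GW.supp B ∧ GW.cycWt u D ≠ 0) with hPu
  set Pv := P'.filter (fun B => ∃ D ∈ GW.cycles (u⁻¹ * w), D ⊆ GW.supp B ∧
    GW.cycWt (u⁻¹ * w) D ≠ 0) with hPv
  have hcover : P' ⊆ Pu ∪ Pv := by
    intro B hBp
    have hBmem := hBp
    rw [hP', Finset.mem_filter] at hBmem
    rcases exists_nonzero_cycle_of_partWt hBmem.1 hBmem.2 with h | h
    · exact Finset.mem_union_left _ (Finset.mem_filter.2 ⟨hBp, h⟩)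
    · exact Finset.mem_union_right _ (Finset.mem_filter.2 ⟨hBp, h⟩)
  have hinj : ∀ (x : GW m n) (PX : Finset (Finset (Finset (Fin n)))),
      PX ⊆ P' →
      (∀ B ∈ PX, ∃ D ∈ GW.cycles x, D ⊆ GW.supp B ∧ GW.cycWt x D ≠ 0) →
      PX.card ≤ ((GW.cycles x).filter fun C => ¬ GW.cycWt x C = 0).card := by
    intro x PX hsub hex
    have hch : ∀ B ∈ PX, ∃ D, D ∈ GW.cycles x ∧ D ⊆ GW.supp B ∧ GW.cycWt x D ≠ 0 := by
      intro B hBp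
      obtain ⟨D, hD1, hD2, hD3⟩ := hex B hBp
      exact ⟨D, hD1, hD2, hD3⟩
    choose! F hF1 hF2 hF3 using hch
    apply Finset.card_le_card_of_injOn F
    · intro B hBp
      exact Finset.mem_filter.2 ⟨hF1 B hBp, hF3 B hBp⟩
    · intro B hBp B' hBp' hFE
      have hBpi : B ∈ GW.piParts u w := (Finset.mem_filter.1 (hsub hBp)).1
      have hBpi' : B' ∈ GW.piParts u w := (Finset.mem_filter.1 (hsub hBp')).1
      obtain ⟨p, hp⟩ := cycle_nonempty (hF1 B hBp)
      have hpB : p ∈ GW.supp B := hF2 B hBp hp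
      have hpB' : p ∈ GW.supp B' := hF2 B' hBp' (hFE ▸ hp)
      exact piParts_disjoint hBpi hBpi'
        (cycleOf_mem_of_mem_supp hBpi hpB) (cycleOf_mem_of_mem_supp hBpi' hpB')
  have hu := hinj u Pu (Finset.filter_subset _ _) (fun B hBp => (Finset.mem_filter.1 hBp).2)
  have hv := hinj (u⁻¹ * w) Pv (Finset.filter_subset _ _)
    (fun B hBp => (Finset.mem_filter.1 hBp).2)
  have h1 : P'.card ≤ Pu.card + Pv.card :=
    le_trans (Finset.card_le_card hcover) (Finset.card_union_le _ _)
  omega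


theorem card_filter_eq_sum {β : Type*} (s : Finset β) (p : β → Prop) [DecidablePred p] :
    (s.filter p).card = ∑ x ∈ s, if p x then 1 else 0 := by
  rw [Finset.card_eq_sum_ones, Finset.sum_filter]

theorem piParts_nonempty {u w : GW m n} {B : Finset (Finset (Fin n))}
    (hB : B ∈ GW.piParts u w) : B.Nonempty := by
  obtain ⟨C0, hC0, rfl⟩ := Finset.mem_image.1 hB
  exact ⟨C0, self_mem_piPart hC0⟩

theorem ncl_jstep_exchange (u w : GW m n) :
    ncl (jstep u.perm w.perm) = ncl (jstep u.perm ((u⁻¹ * w).perm)) := by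
  apply ncl_congr
  intro i j
  have hvp : ∀ p, ((u⁻¹ : GW m n) * w).perm p = u.perm⁻¹ (w.perm p) := fun p => rfl
  constructor
  · refine fun h => eqvGen_closure ?_ h
    rintro p q (hpq | hpq)
    · exact Relation.EqvGen.rel _ _ (Or.inl hpq)
    · refine (Relation.EqvGen.rel p ((u⁻¹ * w).perm p) (Or.inr rfl)).trans _ _ _ ?_
      refine Relation.EqvGen.rel _ _ (Or.inl ?_)
      show u.perm ((u⁻¹ * w).perm p) = q
      rw [hvp, show u.perm (u.perm⁻¹ (w.perm p)) = w.perm p from u.perm.apply_symm_apply _, hpq]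
  · refine fun h => eqvGen_closure ?_ h
    rintro p q (hpq | hpq)
    · exact Relation.EqvGen.rel _ _ (Or.inl hpq)
    · refine (Relation.EqvGen.rel p (w.perm p) (Or.inr rfl)).trans _ _ _ ?_
      refine Relation.EqvGen.symm _ _ (Relation.EqvGen.rel _ _ (Or.inl ?_))
      show u.perm q = w.perm p
      rw [← hpq, hvp]; exact u.perm.apply_symm_apply _

end SuppLayer

end StmtAux

/-- Let `w ∈ G(m,p,n)` and `u ∈ [id, w]_{cdf}`.  Then:
(1) `codimfix(u) + codimfix(u⁻¹w) = n + c(w) − 2|Π_u(w)| + #{parts of Π_u(w) of nonzero weight}`;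
(2) every part of `Π_u(w)` is either a singleton or consists of exactly two cycles of `w`
whose weights are nonzero and sum to `0` in `ℤ/mℤ`. -/
theorem stmt9 (m p n : ℕ) (hm : 0 < m) (hp : 0 < p) (hn : 0 < n) (hpm : p ∣ m)
    (u w : GW m n) (hw : GW.Gmem p hpm w)
    (hu : u ∈ GW.interval p hpm GW.codimfix w) :
    ((GW.codimfix u : ℤ) + (GW.codimfix (u⁻¹ * w) : ℤ) =
      (n : ℤ) + (GW.numCycles w : ℤ) - 2 * ((GW.piParts u w).card : ℤ) +
        (GW.piPartsNonzeroWt u w : ℤ)) ∧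
    (∀ B ∈ GW.piParts u w,
      (∃ C, B = {C}) ∨
      (∃ C₁ C₂, C₁ ≠ C₂ ∧ B = {C₁, C₂} ∧ GW.cycWt w C₁ ≠ 0 ∧ GW.cycWt w C₂ ≠ 0 ∧
        GW.cycWt w C₁ + GW.cycWt w C₂ = 0)) := by
  classical
  obtain ⟨hGu, hleF⟩ := hu
  set v := u⁻¹ * w with hv
  have huvw : u * v = w := by rw [hv]; group
  have hwperm : u.perm * v.perm = w.perm := by rw [← GW.mul_perm, huvw]
  set NZu := ((GW.cycles u).filter fun C => ¬ GW.cycWt u C = 0).card with hNZu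
  set NZv := ((GW.cycles v).filter fun C => ¬ GW.cycWt v C = 0).card with hNZv
  set NZw := ((GW.cycles w).filter fun C => ¬ GW.cycWt w C = 0).card with hNZw
  have hsplitc : ∀ x : GW m n,
      GW.c0 x + ((GW.cycles x).filter fun C => ¬ GW.cycWt x C = 0).card = GW.numCycles x := by
    intro x
    exact Finset.card_filter_add_card_filter_not _
  have hcycn : ∀ x : GW m n, GW.numCycles x ≤ n := by
    intro x
    unfold GW.numCycles GW.cycles
    calc (Finset.univ.image fun i => x.cycleOf i).card
        ≤ (Finset.univ : Finset (Fin n)).card := Finset.card_image_le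
      _ = n := by simp
  have hc0le : ∀ x : GW m n, GW.c0 x ≤ GW.numCycles x := by
    intro x
    exact Finset.card_le_card (Finset.filter_subset _ _)
  have hcdf : ∀ x : GW m n, (GW.codimfix x : ℤ) = (n : ℤ) - GW.c0 x := by
    intro x
    unfold GW.codimfix
    have h := (hc0le x).trans (hcycn x)
    push_cast [Nat.cast_sub h]
    ring
  have e_u : (GW.codimfix u : ℤ) = (n : ℤ) - GW.numCycles u + NZu := by
    rw [hcdf u]
    have h := hsplitc u
    rw [← hNZu] at h
    omega
  have e_v : (GW.codimfix v : ℤ) = (n : ℤ) - GW.numCycles v + NZv := by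
    rw [hcdf v]
    have h := hsplitc v
    rw [← hNZv] at h
    omega
  have e_w : (GW.codimfix w : ℤ) = (n : ℤ) - GW.numCycles w + NZw := by
    rw [hcdf w]
    have h := hsplitc w
    rw [← hNZw] at h
    omega
  have hPc : (GW.piParts u w).card = StmtAux.ncl (StmtAux.jstep u.perm v.perm) := by
    rw [StmtAux.card_piParts, StmtAux.ncl_jstep_exchange u w, ← hv]
  have hgenN : GW.numCycles u + GW.numCycles v + GW.numCycles w ≤
      n + 2 * (GW.piParts u w).card := by
    have h := StmtAux.genus (α := Fin n) u.perm v.perm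
    rw [hwperm, Fintype.card_fin] at h
    rw [StmtAux.numCycles_eq_ncl, StmtAux.numCycles_eq_ncl, StmtAux.numCycles_eq_ncl, hPc]
    exact h
  have hnzp := StmtAux.nzparts_le u w
  rw [← hv, ← hNZu, ← hNZv] at hnzp
  set P := GW.piParts u w with hPdef
  set g : Finset (Finset (Fin n)) → ℤ := fun B =>
    2 * (B.card : ℤ) + (if GW.partWt w B ≠ 0 then (1:ℤ) else 0) - 2 -
      ((B.filter fun C => ¬ GW.cycWt w C = 0).card : ℤ) with hgdef
  have hS1N : ∑ B ∈ P, B.card = GW.numCycles w := by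
    have h := StmtAux.sum_parts u w (fun _ => (1 : ℕ))
    simpa [GW.numCycles, hPdef] using h
  have hS2N : ∑ B ∈ P, (B.filter fun C => ¬ GW.cycWt w C = 0).card = NZw := by
    have h := StmtAux.sum_parts u w (fun C => if ¬ GW.cycWt w C = 0 then (1:ℕ) else 0)
    rw [hNZw]
    rw [StmtAux.card_filter_eq_sum ((GW.cycles w)) (fun C => ¬ GW.cycWt w C = 0)]
    rw [← h]
    apply Finset.sum_congr rfl
    intro B hB
    exact StmtAux.card_filter_eq_sum _ _
  have hS3 : (GW.piPartsNonzeroWt u w : ℤ)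
      = ∑ B ∈ P, (if GW.partWt w B ≠ 0 then (1:ℤ) else 0) := by
    have hPP : GW.piPartsNonzeroWt u w = (P.filter fun B => GW.partWt w B ≠ 0).card := by
      unfold GW.piPartsNonzeroWt
      congr 1
    rw [hPP]
    exact Finset.natCast_card_filter _ _
  have hgsum : ∑ B ∈ P, g B = 2 * (GW.numCycles w : ℤ) + (GW.piPartsNonzeroWt u w : ℤ)
      - 2 * (P.card : ℤ) - (NZw : ℤ) := by
    simp only [hgdef]
    rw [Finset.sum_sub_distrib, Finset.sum_sub_distrib, Finset.sum_add_distrib,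
      ← Finset.mul_sum, ← hS3]
    have hc1 : ∑ B ∈ P, (B.card : ℤ) = (GW.numCycles w : ℤ) := by
      rw [← hS1N]; push_cast; rfl
    have hc2 : ∑ B ∈ P, ((B.filter fun C => ¬ GW.cycWt w C = 0).card : ℤ) = (NZw : ℤ) := by
      rw [← hS2N]; push_cast; rfl
    rw [hc1, hc2]
    rw [Finset.sum_const]
    push_cast
    ring
  have hgnonneg : ∀ B ∈ P, 0 ≤ g B := by
    intro B hB
    simp only [hgdef]
    by_cases hc1 : B.card = 1
    · obtain ⟨C, rfl⟩ := Finset.card_eq_one.1 hc1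
      have hpw : GW.partWt w ({C} : Finset (Finset (Fin n))) = GW.cycWt w C :=
        Finset.sum_singleton _ _
      rw [Finset.filter_singleton]
      by_cases h0 : GW.cycWt w C = 0 <;> simp [hpw, h0]
    · have h1 : 1 ≤ B.card := Finset.card_pos.2 (StmtAux.piParts_nonempty hB)
      have h2 := Finset.card_filter_le B (fun C => ¬ GW.cycWt w C = 0)
      have h3 : 2 ≤ B.card := by omega
      by_cases hpw : GW.partWt w B ≠ 0
      · rw [if_pos hpw]
        push_cast
        omega
      · rw [if_neg hpw]
        push_cast
        omega
  have hleFZ : (GW.codimfix u : ℤ) + (GW.codimfix v : ℤ) = (GW.codimfix w : ℤ) := by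
    exact_mod_cast hleF
  have hgenZ : (GW.numCycles u : ℤ) + GW.numCycles v + GW.numCycles w ≤
      (n : ℤ) + 2 * (P.card : ℤ) := by exact_mod_cast hgenN
  have hnzpZ : (GW.piPartsNonzeroWt u w : ℤ) ≤ (NZu : ℤ) + NZv := by exact_mod_cast hnzp
  have hsum_nonneg : 0 ≤ ∑ B ∈ P, g B := Finset.sum_nonneg hgnonneg
  have goal1 : (GW.codimfix u : ℤ) + (GW.codimfix v : ℤ) =
      (n : ℤ) + (GW.numCycles w : ℤ) - 2 * (P.card : ℤ) +
        (GW.piPartsNonzeroWt u w : ℤ) := by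
    rw [e_u, e_v]
    rw [e_u, e_v, e_w] at hleFZ
    linarith [hgsum, hsum_nonneg, hgenZ, hnzpZ]
  refine ⟨goal1, ?_⟩
  have hsum0 : ∑ B ∈ P, g B = 0 := by
    rw [e_u, e_v] at goal1
    rw [e_u, e_v, e_w] at hleFZ
    linarith [hgsum]
  have hterm0 := (Finset.sum_eq_zero_iff_of_nonneg hgnonneg).1 hsum0
  intro B hB
  have hg0 := hterm0 B hB
  simp only [hgdef] at hg0
  by_cases hc1 : B.card = 1
  · obtain ⟨C, rfl⟩ := Finset.card_eq_one.1 hc1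
    exact Or.inl ⟨C, rfl⟩
  · right
    have h1 : 1 ≤ B.card := Finset.card_pos.2 (StmtAux.piParts_nonempty hB)
    have h2 := Finset.card_filter_le B (fun C => ¬ GW.cycWt w C = 0)
    have hkey : B.card = 2 ∧ (B.filter fun C => ¬ GW.cycWt w C = 0).card = 2 ∧
        GW.partWt w B = 0 := by
      by_cases hpw : GW.partWt w B ≠ 0
      · rw [if_pos hpw] at hg0
        exfalso
        omega
      · rw [if_neg hpw] at hg0
        push_neg at hpw
        refine ⟨by omega, by omega, hpw⟩
    obtain ⟨hk2, hnz2, hpw0⟩ := hkey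
    obtain ⟨C₁, C₂, hC12, rfl⟩ := Finset.card_eq_two.1 hk2
    have hfeq : ({C₁, C₂} : Finset (Finset (Fin n))).filter (fun C => ¬ GW.cycWt w C = 0) =
        {C₁, C₂} := by
      apply Finset.eq_of_subset_of_card_le (Finset.filter_subset _ _)
      rw [hnz2, Finset.card_pair hC12]
    have hc₁ : ¬ GW.cycWt w C₁ = 0 := by
      have hmem : C₁ ∈ ({C₁, C₂} : Finset (Finset (Fin n))).filter
          (fun C => ¬ GW.cycWt w C = 0) := by
        rw [hfeq]; exact Finset.mem_insert_self _ _
      exact (Finset.mem_filter.1 hmem).2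
    have hc₂ : ¬ GW.cycWt w C₂ = 0 := by
      have hmem : C₂ ∈ ({C₁, C₂} : Finset (Finset (Fin n))).filter
          (fun C => ¬ GW.cycWt w C = 0) := by
        rw [hfeq]
        exact Finset.mem_insert.2 (Or.inr (Finset.mem_singleton_self _))
      exact (Finset.mem_filter.1 hmem).2
    have hsum2 : GW.cycWt w C₁ + GW.cycWt w C₂ = 0 := by
      have hp2 : GW.partWt w ({C₁, C₂} : Finset (Finset (Fin n))) =
          GW.cycWt w C₁ + GW.cycWt w C₂ := Finset.sum_pair hC12
      rw [hp2] at hpw0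
      exact hpw0
    exact ⟨C₁, C₂, hC12, rfl, hc₁, hc₂, hsum2⟩
end
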